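/- arXiv:2312.05000 — 7 statements merged into one kernel-verified Lean document; each statement's English description precedes it below -/
import Mathlib

section
/- Let P = {(x,y,z) ∈ ℝ³ : x + y + z = 4}, regarded as a subset of ℝ³ equipped with the supremum norm ‖(x,y,z)‖∞ = max(|x|,|y|,|z|). Then P is not a nonexpansive retract of ℓ∞³: there is no map r : ℝ³ → ℝ³ with ‖r(u) − r(v)‖∞ ≤ ‖u − v‖∞ for all u, v, whose range is contained in P and which satisfies r(p) = p for every p ∈ P. -/
/-- The plane `x + y + z = 4` in `ℓ∞³` (that is, `ℝ³` with the supremum norm,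
here `Fin 3 → ℝ` with its sup-norm) is not a nonexpansive retract of `ℓ∞³`. -/
theorem plane_not_nonexpansive_retract_linfty3 :
    ¬ ∃ r : (Fin 3 → ℝ) → (Fin 3 → ℝ),
      LipschitzWith 1 r ∧
      Set.range r ⊆ {p : Fin 3 → ℝ | p 0 + p 1 + p 2 = 4} ∧
      ∀ p ∈ {p : Fin 3 → ℝ | p 0 + p 1 + p 2 = 4}, r p = p := by
  rintro ⟨r, hlip, hrange, hfix⟩
  have hqP : r 0 0 + r 0 1 + r 0 2 = 4 := hrange ⟨0, rfl⟩
  have key : ∀ b : Fin 3 → ℝ, b 0 + b 1 + b 2 = 4 →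
      dist (0 : Fin 3 → ℝ) b ≤ 4 → ∀ i, |r 0 i - b i| ≤ 4 := by
    intro b hb hd i
    have h1 : dist (r 0) (r b) ≤ dist (0 : Fin 3 → ℝ) b := by
      simpa using hlip.dist_le_mul 0 b
    rw [hfix b hb] at h1
    have h2 : dist (r 0 i) (b i) ≤ dist (r 0) b := dist_le_pi_dist _ _ i
    rw [Real.dist_eq] at h2
    linarith
  have hd : ∀ b : Fin 3 → ℝ, (∀ i, |b i| ≤ 4) → dist (0 : Fin 3 → ℝ) b ≤ 4 := by
    intro b hb
    rw [dist_pi_le_iff (by norm_num)]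
    intro i
    rw [Real.dist_eq]
    simpa [abs_sub_comm] using hb i
  have h1 := key ![-4, 4, 4] (by norm_num [Matrix.cons_val_zero, Matrix.cons_val_one, Matrix.head_cons, Matrix.cons_val_two, Matrix.tail_cons]) (hd _ (by intro i; fin_cases i <;> norm_num)) 0
  have h2 := key ![4, -4, 4] (by norm_num [Matrix.cons_val_zero, Matrix.cons_val_one, Matrix.head_cons, Matrix.cons_val_two, Matrix.tail_cons]) (hd _ (by intro i; fin_cases i <;> norm_num)) 1
  have h3 := key ![4, 4, -4] (by norm_num [Matrix.cons_val_zero, Matrix.cons_val_one, Matrix.head_cons, Matrix.cons_val_two, Matrix.tail_cons]) (hd _ (by intro i; fin_cases i <;> norm_num)) 2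
  simp only [Matrix.cons_val_zero, Matrix.cons_val_one, Matrix.head_cons,
    Matrix.cons_val_two, Matrix.tail_cons] at h1 h2 h3
  rw [abs_le] at h1 h2 h3
  linarith [h1.2, h2.2, h3.2]
end

section
/- Let X be an infinite-dimensional real Banach space. Then there exists a continuous map f from the closed unit ball B_X = {x ∈ X : ‖x‖ ≤ 1} into itself with no fixed point, i.e., f(x) ≠ x for every x ∈ B_X. -/
open Set Metric Filter

section Aux

variable {X : Type*} [NormedAddCommGroup X] [NormedSpace ℝ X] [CompleteSpace X]

/-- A Riesz-type sequence: unit vectors each at distance at least 1/2 from the span of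
all previous ones. -/
lemma exists_riesz_seq (hX : ¬ FiniteDimensional ℝ X) :
    ∃ x : ℕ → X, (∀ n, ‖x n‖ = 1) ∧
      ∀ n, ∀ y ∈ Submodule.span ℝ (x '' Set.Iio n), (1:ℝ)/2 ≤ ‖x n - y‖ := by
  have key : ∀ l : List X, ∃ v : X, ‖v‖ = 1 ∧
      ∀ y ∈ Submodule.span ℝ {z : X | z ∈ l}, (1:ℝ)/2 ≤ ‖v - y‖ := by
    intro l
    set F : Submodule ℝ X := Submodule.span ℝ {z : X | z ∈ l} with hF
    have hfin : ({z : X | z ∈ l} : Set X).Finite := l.finite_toSet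
    haveI : FiniteDimensional ℝ F := FiniteDimensional.span_of_finite ℝ hfin
    have Fclosed : IsClosed (F : Set X) := Submodule.closed_of_finiteDimensional _
    have hex : ∃ x : X, x ∉ F := by
      by_contra h
      push_neg at h
      apply hX
      have htop : F = ⊤ := by
        ext z; simp [h z]
      have : FiniteDimensional ℝ (⊤ : Submodule ℝ X) := htop ▸ inferInstance
      exact FiniteDimensional.of_injective (Submodule.topEquiv (R := ℝ) (M := X)).symm.toLinearMap
        (Submodule.topEquiv (R := ℝ) (M := X)).symm.injective
    obtain ⟨x₀, hx₀F, hx₀⟩ := riesz_lemma (𝕜 := ℝ) Fclosed hex (r := 1/2) (by norm_num)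
    have hx₀ne : x₀ ≠ 0 := fun h => hx₀F (h ▸ F.zero_mem)
    have hn : (0:ℝ) < ‖x₀‖ := norm_pos_iff.mpr hx₀ne
    refine ⟨‖x₀‖⁻¹ • x₀, ?_, ?_⟩
    · rw [norm_smul, norm_inv, norm_norm, inv_mul_cancel₀ hn.ne']
    · intro y hy
      have hy' : ‖x₀‖ • y ∈ F := F.smul_mem _ hy
      have := hx₀ _ hy'
      have hveq : ‖x₀‖⁻¹ • x₀ - y = ‖x₀‖⁻¹ • (x₀ - ‖x₀‖ • y) := by
        rw [smul_sub, smul_smul, inv_mul_cancel₀ hn.ne', one_smul]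
      have hcalc : ‖‖x₀‖⁻¹ • x₀ - y‖ = ‖x₀‖⁻¹ * ‖x₀ - ‖x₀‖ • y‖ := by
        rw [hveq, norm_smul, Real.norm_of_nonneg (inv_nonneg.mpr hn.le)]
      rw [hcalc]
      calc (1:ℝ)/2 = ‖x₀‖⁻¹ * (1/2 * ‖x₀‖) := by field_simp
        _ ≤ ‖x₀‖⁻¹ * ‖x₀ - ‖x₀‖ • y‖ :=
            mul_le_mul_of_nonneg_left this (inv_nonneg.mpr hn.le)
  choose pick h1 h2 using key
  classical
  let g : ℕ → List X := fun n => Nat.rec ([]) (fun _ l => l ++ [pick l]) n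
  refine ⟨fun n => pick (g n), fun n => h1 (g n), ?_⟩
  have hg : ∀ n, g n = (List.range n).map (fun n => pick (g n)) := by
    intro n
    induction n with
    | zero => simp [g]
    | succ n ih =>
      have : g (n+1) = g n ++ [pick (g n)] := rfl
      rw [this, List.range_succ, List.map_append, ← ih]
      simp
  intro n
  have hset : {z : X | z ∈ g n} = (fun n => pick (g n)) '' Set.Iio n := by
    rw [hg n]
    ext z
    simp [List.mem_map, List.mem_range, Set.mem_image]
  intro y hy
  exact h2 (g n) y (by rwa [hset])

end Aux

/-- Every infinite-dimensional real Banach space admits a continuous self-map of its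
closed unit ball without fixed points. -/
theorem exists_fixed_point_free_continuous_selfmap_of_ball
    {X : Type*} [NormedAddCommGroup X] [NormedSpace ℝ X] [CompleteSpace X]
    (hX : ¬ FiniteDimensional ℝ X) :
    ∃ f : Metric.closedBall (0 : X) 1 → Metric.closedBall (0 : X) 1,
      Continuous f ∧ ∀ x, f x ≠ x := by
  obtain ⟨x, hx1, hx2⟩ := exists_riesz_seq hX
  -- the clamp functions
  set c : ℕ → ℝ → ℝ := fun k τ => min 1 (max 0 (τ - k)) with hc
  have hc_one : ∀ (k : ℕ) (τ : ℝ), (k:ℝ) + 1 ≤ τ → c k τ = 1 := by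
    intro k τ h
    simp only [hc, min_eq_left_iff, le_max_iff]
    right; linarith
  have hc_zero : ∀ (k : ℕ) (τ : ℝ), τ ≤ k → c k τ = 0 := by
    intro k τ h
    simp only [hc]
    rw [max_eq_left (by linarith), min_eq_right (by norm_num)]
  have hc_cont : ∀ k : ℕ, Continuous (c k) :=
    fun k => continuous_const.min ((continuous_const.max (continuous_id.sub continuous_const)))
  -- the polygonal path
  set γ : ℝ → X := fun τ => x 0 + ∑' k : ℕ, c k τ • (x (k+1) - x k) with hγ
  have hγ_sum : ∀ (τ : ℝ) (N : ℕ), τ ≤ N →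
      γ τ = x 0 + ∑ k ∈ Finset.range N, c k τ • (x (k+1) - x k) := by
    intro τ N hN
    have : ∑' k : ℕ, c k τ • (x (k+1) - x k)
        = ∑ k ∈ Finset.range N, c k τ • (x (k+1) - x k) := by
      refine tsum_eq_sum ?_
      intro k hk
      have : (N:ℝ) ≤ k := by exact_mod_cast Nat.le_of_not_lt (Finset.mem_range.not.mp hk)
      rw [hc_zero k τ (by linarith), zero_smul]
    show x 0 + ∑' k : ℕ, c k τ • (x (k+1) - x k) = _
    rw [this]
  have hγ_eq : ∀ (n : ℕ) (τ : ℝ), (n:ℝ) ≤ τ → τ ≤ (n:ℝ) + 1 →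
      γ τ = (1 - (τ - n)) • x n + (τ - n) • x (n+1) := by
    intro n τ h1 h2
    rw [hγ_sum τ (n+1) (by push_cast; linarith)]
    rw [Finset.sum_range_succ]
    have hmid : ∀ k ∈ Finset.range n, c k τ • (x (k+1) - x k) = x (k+1) - x k := by
      intro k hk
      have : (k:ℝ) + 1 ≤ τ := by
        have : (k:ℝ) + 1 ≤ n := by exact_mod_cast Finset.mem_range.mp hk
        linarith
      rw [hc_one k τ this]; simp
    rw [Finset.sum_congr rfl hmid, Finset.sum_range_sub (fun k => x k)]
    have hcn : c n τ = τ - n := by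
      simp only [hc]
      rw [max_eq_right (by linarith), min_eq_right (by linarith)]
    rw [hcn]
    module
  have hγ_cont : Continuous γ := by
    rw [continuous_iff_continuousAt]
    intro τ₀
    set N : ℕ := ⌈τ₀⌉₊ + 1 with hN
    have hτ₀ : τ₀ < (N:ℝ) := by
      push_cast
      exact lt_of_le_of_lt (Nat.le_ceil τ₀) (by rw [hN]; push_cast; linarith)
    have hev : γ =ᶠ[nhds τ₀]
        (fun τ => x 0 + ∑ k ∈ Finset.range N, c k τ • (x (k+1) - x k)) := by
      filter_upwards [Iio_mem_nhds hτ₀] with τ hτ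
      exact hγ_sum τ N (le_of_lt hτ)
    refine ContinuousAt.congr ?_ hev.symm
    apply Continuous.continuousAt
    exact continuous_const.add (continuous_finset_sum _
      (fun k _ => (hc_cont k).smul continuous_const))
  have hγ_mem : ∀ τ : ℝ, 0 ≤ τ → γ τ ∈ Metric.closedBall (0:X) 1 := by
    intro τ hτ
    set n : ℕ := ⌊τ⌋₊ with hn
    have h1 : (n:ℝ) ≤ τ := Nat.floor_le hτ
    have h2 : τ ≤ (n:ℝ) + 1 := (Nat.lt_floor_add_one τ).le
    rw [mem_closedBall_zero_iff, hγ_eq n τ h1 h2]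
    calc ‖(1 - (τ - n)) • x n + (τ - n) • x (n+1)‖
        ≤ ‖(1 - (τ - n)) • x n‖ + ‖(τ - n) • x (n+1)‖ := norm_add_le _ _
      _ = |1 - (τ - n)| * ‖x n‖ + |τ - n| * ‖x (n+1)‖ := by rw [norm_smul, norm_smul]; rfl
      _ = (1 - (τ - n)) * 1 + (τ - n) * 1 := by
          rw [hx1, hx1, abs_of_nonneg (by linarith), abs_of_nonneg (by linarith)]
      _ = 1 := by ring
  -- separation of far-apart segments
  have hsep : ∀ (m' m : ℕ) (s s' : ℝ), m' + 2 ≤ m → 0 ≤ s → s ≤ 1 → 0 ≤ s' → s' ≤ 1 →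
      (1:ℝ)/8 ≤ ‖((1-s) • x m + s • x (m+1)) - ((1-s') • x m' + s' • x (m'+1))‖ := by
    intro m' m s s' hmm hs0 hs1 hs0' hs1'
    set y' : X := (1-s') • x m' + s' • x (m'+1) with hy'def
    have hy'm : y' ∈ Submodule.span ℝ (x '' Set.Iio m) := by
      apply Submodule.add_mem
      · exact Submodule.smul_mem _ _ (Submodule.subset_span ⟨m', Set.mem_Iio.mpr (by omega), rfl⟩)
      · exact Submodule.smul_mem _ _ (Submodule.subset_span ⟨m'+1, Set.mem_Iio.mpr (by omega), rfl⟩)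
    have hy'm1 : y' ∈ Submodule.span ℝ (x '' Set.Iio (m+1)) := by
      refine Submodule.span_mono (Set.image_mono ?_) hy'm
      intro a ha
      exact Set.mem_Iio.mpr (lt_trans (Set.mem_Iio.mp ha) (by omega))
    rcases le_or_gt (1/4 : ℝ) s with hs | hs
    · -- use distance of x (m+1) to span
      have hspos : (0:ℝ) < s := by linarith
      set w : X := s⁻¹ • (y' - (1-s) • x m) with hw
      have hwm : w ∈ Submodule.span ℝ (x '' Set.Iio (m+1)) := by
        apply Submodule.smul_mem
        apply Submodule.sub_mem _ hy'm1
        exact Submodule.smul_mem _ _ (Submodule.subset_span ⟨m, Set.mem_Iio.mpr (by omega), rfl⟩)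
      have hkey : ((1-s) • x m + s • x (m+1)) - y' = s • (x (m+1) - w) := by
        rw [hw, smul_sub, smul_smul, mul_inv_cancel₀ hspos.ne', one_smul]
        abel
      rw [hkey, norm_smul, Real.norm_of_nonneg hspos.le]
      have := hx2 (m+1) w hwm
      calc (1:ℝ)/8 = (1/4) * (1/2) := by norm_num
        _ ≤ s * ‖x (m+1) - w‖ := by gcongr
    · -- use distance of x m to span
      have h1s : (0:ℝ) < 1 - s := by linarith
      set w : X := (1-s)⁻¹ • y' with hw
      have hwm : w ∈ Submodule.span ℝ (x '' Set.Iio m) := Submodule.smul_mem _ _ hy'm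
      have hkey : (1-s) • x m - y' = (1-s) • (x m - w) := by
        rw [hw, smul_sub, smul_smul, mul_inv_cancel₀ h1s.ne', one_smul]
      have hb1 : (1-s) * (1/2) ≤ ‖(1-s) • x m - y'‖ := by
        rw [hkey, norm_smul, Real.norm_of_nonneg h1s.le]
        gcongr
        exact hx2 m w hwm
      have hb2 : ‖(1-s) • x m - y'‖ - s ≤ ‖((1-s) • x m + s • x (m+1)) - y'‖ := by
        have heq : (1-s) • x m - y' = (((1-s) • x m + s • x (m+1)) - y') - s • x (m+1) := by abel
        have := norm_sub_le (((1-s) • x m + s • x (m+1)) - y') (s • x (m+1))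
        rw [← heq] at this
        have hns : ‖s • x (m+1)‖ = s := by
          rw [norm_smul, Real.norm_of_nonneg hs0, hx1, mul_one]
        linarith [this, hns.le.trans_eq rfl]
      have : (1-s) * (1/2) - s ≤ ‖((1-s) • x m + s • x (m+1)) - y'‖ := by linarith
      nlinarith
  -- separation along the path
  have hγsep : ∀ τ' τ : ℝ, 0 ≤ τ' → τ' + 3 ≤ τ → (1:ℝ)/8 ≤ ‖γ τ - γ τ'‖ := by
    intro τ' τ hτ' hττ'
    have hτ : (0:ℝ) ≤ τ := by linarith
    set m' : ℕ := ⌊τ'⌋₊ with hm'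
    set m : ℕ := ⌊τ⌋₊ with hm
    have h1' : (m':ℝ) ≤ τ' := Nat.floor_le hτ'
    have h2' : τ' ≤ (m':ℝ) + 1 := (Nat.lt_floor_add_one τ').le
    have h1 : (m:ℝ) ≤ τ := Nat.floor_le hτ
    have h2 : τ ≤ (m:ℝ) + 1 := (Nat.lt_floor_add_one τ).le
    have hmm : m' + 2 ≤ m := by
      have : ((m' + 2 : ℕ):ℝ) ≤ τ := by push_cast; linarith
      exact Nat.le_floor this
    rw [hγ_eq m' τ' h1' h2', hγ_eq m τ h1 h2]
    exact hsep m' m (τ - m) (τ' - m') hmm (by linarith) (by linarith) (by linarith) (by linarith)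
  -- the tails and bump functions
  set T : ℕ → Set X := fun n => γ '' Set.Ici (n:ℝ) with hT
  have hT_ne : ∀ n, (T n).Nonempty := fun n => ⟨γ n, ⟨(n:ℝ), Set.mem_Ici.mpr le_rfl, rfl⟩⟩
  have hT_sub : ∀ {n N : ℕ}, N ≤ n → T n ⊆ T N := by
    intro n N h
    apply Set.image_mono
    intro a ha
    exact Set.mem_Ici.mpr (le_trans (by exact_mod_cast h) (Set.mem_Ici.mp ha))
  set σ : ℕ → X → ℝ := fun n y => max 0 (1 - 48 * Metric.infDist y (T n)) with hσ
  have hσ_nonneg : ∀ n y, 0 ≤ σ n y := fun n y => le_max_left _ _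
  have hσ_cont : ∀ n, Continuous (σ n) := by
    intro n
    exact continuous_const.max (continuous_const.sub
      ((continuous_const.mul (Metric.continuous_infDist_pt (T n)))))
  have hσ_one : ∀ (n : ℕ) (τ : ℝ), (n:ℝ) ≤ τ → σ n (γ τ) = 1 := by
    intro n τ h
    have : Metric.infDist (γ τ) (T n) = 0 :=
      Metric.infDist_zero_of_mem ⟨τ, Set.mem_Ici.mpr h, rfl⟩
    simp [hσ, this]
  have hσ_zero : ∀ (n : ℕ) (y : X), 1/48 ≤ Metric.infDist y (T n) → σ n y = 0 := by
    intro n y h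
    simp only [hσ]
    rw [max_eq_left]
    linarith
  -- local vanishing of all high-index bumps
  have window : ∀ y : X, ∃ N : ℕ, ∀ z : X, dist z y < 1/96 → ∀ n, N ≤ n → σ n z = 0 := by
    intro y
    have hbig : ∃ N : ℕ, (1:ℝ)/24 ≤ Metric.infDist y (T N) := by
      by_contra h
      push_neg at h
      obtain ⟨z', hz'T, hz'⟩ := (Metric.infDist_lt_iff (hT_ne 0)).mp (h 0)
      obtain ⟨τ', hτ'm, rfl⟩ := hz'T
      have hτ' : (0:ℝ) ≤ τ' := by
        have := Set.mem_Ici.mp hτ'm; exact_mod_cast this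
      set N : ℕ := ⌈τ'⌉₊ + 3 with hN
      obtain ⟨z, hzT, hz⟩ := (Metric.infDist_lt_iff (hT_ne N)).mp (h N)
      obtain ⟨τ, hτm, rfl⟩ := hzT
      have hτ : ((N:ℕ):ℝ) ≤ τ := Set.mem_Ici.mp hτm
      have hτge : τ' + 3 ≤ τ := by
        have h1 : τ' ≤ ⌈τ'⌉₊ := Nat.le_ceil τ'
        have h2 : ((⌈τ'⌉₊ + 3 : ℕ):ℝ) ≤ τ := by exact_mod_cast hτ
        push_cast at h2
        linarith
      have := hγsep τ' τ hτ' hτge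
      have hd : dist (γ τ) (γ τ') ≤ dist (γ τ) y + dist y (γ τ') := dist_triangle _ _ _
      rw [dist_eq_norm] at hd
      have : (1:ℝ)/8 ≤ dist (γ τ) y + dist y (γ τ') := le_trans this hd
      rw [dist_comm y (γ τ'), dist_comm (γ τ) y] at this
      rw [dist_comm (γ τ') y] at this
      linarith
    obtain ⟨N, hN⟩ := hbig
    refine ⟨N, fun z hz n hn => ?_⟩
    apply hσ_zero
    have hsub : Metric.infDist y (T N) ≤ Metric.infDist y (T n) :=
      Metric.infDist_le_infDist_of_subset (hT_sub hn) (hT_ne n)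
    have htri : Metric.infDist y (T n) ≤ Metric.infDist z (T n) + dist y z :=
      Metric.infDist_le_infDist_add_dist
    rw [dist_comm] at hz
    linarith
  -- the height function
  set ρ : X → ℝ := fun y => ∑' n : ℕ, σ n y with hρ
  have hρ_summable : ∀ y : X, Summable (fun n => σ n y) := by
    intro y
    obtain ⟨N, hN⟩ := window y
    exact summable_of_ne_finset_zero (s := Finset.range N)
      (fun n hn => hN y (by simp) n
        (Nat.le_of_not_lt (Finset.mem_range.not.mp hn)))
  have hρ_nonneg : ∀ y, 0 ≤ ρ y := fun y => tsum_nonneg (fun n => hσ_nonneg n y)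
  have hρ_cont : Continuous ρ := by
    rw [continuous_iff_continuousAt]
    intro y
    obtain ⟨N, hN⟩ := window y
    have hev : ρ =ᶠ[nhds y] (fun z => ∑ n ∈ Finset.range N, σ n z) := by
      filter_upwards [Metric.ball_mem_nhds y (by norm_num : (0:ℝ) < 1/96)] with z hz
      refine tsum_eq_sum ?_
      intro n hn
      exact hN z (Metric.mem_ball.mp hz) n (Nat.le_of_not_lt (Finset.mem_range.not.mp hn))
    refine ContinuousAt.congr ?_ hev.symm
    exact (continuous_finset_sum _ (fun n _ => hσ_cont n)).continuousAt
  have hρ_ge : ∀ τ : ℝ, 0 ≤ τ → τ ≤ ρ (γ τ) := by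
    intro τ hτ
    set M : ℕ := ⌊τ⌋₊ with hM
    have hsum : ∑ n ∈ Finset.range (M+1), σ n (γ τ) ≤ ρ (γ τ) :=
      Summable.sum_le_tsum _ (fun n _ => hσ_nonneg n (γ τ)) (hρ_summable (γ τ))
    have hval : ∀ n ∈ Finset.range (M+1), σ n (γ τ) = 1 := by
      intro n hn
      apply hσ_one
      have : n ≤ M := Nat.lt_succ_iff.mp (Finset.mem_range.mp hn)
      have h1 : (n:ℝ) ≤ M := by exact_mod_cast this
      exact h1.trans (Nat.floor_le hτ)
    rw [Finset.sum_congr rfl hval, Finset.sum_const, Finset.card_range, nsmul_eq_mul,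
      mul_one] at hsum
    have : τ ≤ (M:ℝ) + 1 := (Nat.lt_floor_add_one τ).le
    push_cast at hsum
    linarith
  -- the map
  refine ⟨fun p => ⟨γ (ρ p.1 + 1), hγ_mem _ (by linarith [hρ_nonneg p.1])⟩, ?_, ?_⟩
  · apply Continuous.subtype_mk
    exact hγ_cont.comp ((hρ_cont.comp continuous_subtype_val).add continuous_const)
  · intro p hp
    have hval : γ (ρ p.1 + 1) = p.1 := congrArg Subtype.val hp
    have h0 : 0 ≤ ρ p.1 + 1 := by linarith [hρ_nonneg p.1]
    have := hρ_ge (ρ p.1 + 1) h0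
    rw [hval] at this
    linarith
end

section
/- Let ℓ∞ be the Banach space of bounded real sequences with the supremum norm, and let c₀ = {x ∈ ℓ∞ : x_n → 0 as n → ∞} be the closed subspace of null sequences. Then c₀ is a 2-Lipschitz retract of ℓ∞: there exists a map r : ℓ∞ → ℓ∞ with ‖r(x) − r(y)‖∞ ≤ 2‖x − y‖∞ for all x, y ∈ ℓ∞, whose range is contained in c₀, and with r(x) = x for every x ∈ c₀. -/
open Filter
open scoped ENNReal

set_option linter.unusedVariables false

lemma key (s t a b : ℝ) (hs : 0 ≤ s) (ht : 0 ≤ t) :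
    |(a - max (-s) (min s a)) - (b - max (-t) (min t b))| ≤ |a - b| + |s - t| := by
  rw [abs_le]
  rcases min_choice s a with hm | hm <;> rcases min_choice t b with hn | hn <;>
    rcases max_choice (-s) (min s a) with h1 | h1 <;>
    rcases max_choice (-t) (min t b) with h2 | h2 <;>
    constructor <;>
    linarith [min_le_left s a, min_le_right s a, min_le_left t b, min_le_right t b,
      le_max_left (-s) (min s a), le_max_right (-s) (min s a),
      le_max_left (-t) (min t b), le_max_right (-t) (min t b),
      le_abs_self (a - b), neg_abs_le (a - b), le_abs_self (s - t), neg_abs_le (s - t)]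

lemma key2 (s a ε : ℝ) (hs : 0 ≤ s) (hε : 0 < ε) (h : |a| < s + ε) : |a - max (-s) (min s a)| < ε := by
  rw [abs_lt] at h ⊢
  rcases min_choice s a with hm | hm <;> rcases max_choice (-s) (min s a) with h1 | h1 <;>
    constructor <;>
    linarith [min_le_left s a, min_le_right s a,
      le_max_left (-s) (min s a), le_max_right (-s) (min s a)]

lemma key3 (s a : ℝ) (hs : 0 ≤ s) : |a - max (-s) (min s a)| ≤ |a| := by
  rw [abs_le]
  rcases min_choice s a with hm | hm <;> rcases max_choice (-s) (min s a) with h1 | h1 <;>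
    constructor <;>
    linarith [min_le_left s a, min_le_right s a,
      le_max_left (-s) (min s a), le_max_right (-s) (min s a),
      le_abs_self a, neg_abs_le a]


section aux
variable (x y : lp (fun _ : ℕ => ℝ) ∞)

lemma abs_apply_le_norm (n : ℕ) : |x n| ≤ ‖x‖ := by
  have h := lp.norm_apply_le_norm ENNReal.top_ne_zero x n
  rwa [Real.norm_eq_abs] at h

lemma bddU : IsBoundedUnder (· ≤ ·) atTop (fun n => |x n|) :=
  isBoundedUnder_of ⟨‖x‖, abs_apply_le_norm x⟩

lemma cobddU : IsCoboundedUnder (· ≤ ·) atTop (fun n => |x n|) :=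
  IsBoundedUnder.isCoboundedUnder_le (isBoundedUnder_of ⟨0, fun n => abs_nonneg (x n)⟩)

noncomputable def pp : ℝ := limsup (fun n => |x n|) atTop

lemma pp_nonneg : 0 ≤ pp x :=
  le_limsup_of_frequently_le (Frequently.of_forall fun n => abs_nonneg (x n)) (bddU x)

lemma pp_lip : |pp x - pp y| ≤ ‖x - y‖ := by
  have main : ∀ u v : lp (fun _ : ℕ => ℝ) ∞, pp u ≤ pp v + ‖u - v‖ := by
    intro u v
    have h1 : ∀ n, |u n| ≤ |v n| + ‖u - v‖ := by
      intro n
      have h2 : |u n - v n| ≤ ‖u - v‖ := by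
        have h3 := abs_apply_le_norm (u - v) n
        rw [lp.coeFn_sub, Pi.sub_apply] at h3
        exact h3
      have := abs_sub_abs_le_abs_sub (u n) (v n)
      linarith
    calc pp u ≤ limsup (fun n => |v n| + ‖u - v‖) atTop := by
          refine limsup_le_limsup (Eventually.of_forall h1)
            (cobddU u) ?_
          exact isBoundedUnder_of ⟨‖v‖ + ‖u - v‖, fun n => by
            linarith [abs_apply_le_norm v n]⟩
      _ = pp v + ‖u - v‖ := limsup_add_const atTop (fun n => |v n|) ‖u - v‖
            (bddU v) (cobddU v)
  rw [abs_sub_le_iff]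
  constructor
  · linarith [main x y]
  · have := main y x
    rw [norm_sub_rev] at this
    linarith

lemma pp_eq_zero (h : Tendsto (fun n => x n) atTop (nhds 0)) : pp x = 0 := by
  have : Tendsto (fun n => |x n|) atTop (nhds 0) := by
    simpa using h.abs
  exact this.limsup_eq

end aux

/-- `c₀`, the set of null sequences, viewed as a subset of the Banach space `ℓ∞` of
bounded real sequences with the supremum norm. -/
def cZero : Set (lp (fun _ : ℕ => ℝ) ∞) :=
  {x | Tendsto (fun n => x n) atTop (nhds 0)}

/-- `c₀` is a 2-Lipschitz retract of `ℓ∞`. -/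
theorem cZero_two_lipschitz_retract_of_linfty :
    ∃ r : lp (fun _ : ℕ => ℝ) ∞ → lp (fun _ : ℕ => ℝ) ∞,
      LipschitzWith 2 r ∧ Set.range r ⊆ cZero ∧ ∀ x ∈ cZero, r x = x := by
  classical
  have hmem : ∀ x : lp (fun _ : ℕ => ℝ) ∞,
      Memℓp (fun n => x n - max (-(pp x)) (min (pp x) (x n))) ∞ := by
    intro x
    apply memℓp_infty
    refine ⟨‖x‖, ?_⟩
    rintro - ⟨n, rfl⟩
    simp only [Real.norm_eq_abs]
    exact le_trans (key3 (pp x) (x n) (pp_nonneg x)) (abs_apply_le_norm x n)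
  set r : lp (fun _ : ℕ => ℝ) ∞ → lp (fun _ : ℕ => ℝ) ∞ :=
    fun x => ⟨fun n => x n - max (-(pp x)) (min (pp x) (x n)), hmem x⟩ with hr
  have hcoe : ∀ (x : lp (fun _ : ℕ => ℝ) ∞) (n : ℕ),
      (r x) n = x n - max (-(pp x)) (min (pp x) (x n)) := fun x n => rfl
  refine ⟨r, ?_, ?_, ?_⟩
  · apply LipschitzWith.of_dist_le_mul
    intro x y
    rw [dist_eq_norm, dist_eq_norm]
    have h2 : ((2 : NNReal) : ℝ) = 2 := by norm_num
    rw [h2]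
    refine lp.norm_le_of_forall_le (by positivity) fun n => ?_
    rw [lp.coeFn_sub, Pi.sub_apply, Real.norm_eq_abs, hcoe, hcoe]
    have h3 := key (pp x) (pp y) (x n) (y n) (pp_nonneg x) (pp_nonneg y)
    have h4 : |x n - y n| ≤ ‖x - y‖ := by
      have h5 := abs_apply_le_norm (x - y) n
      rwa [lp.coeFn_sub, Pi.sub_apply] at h5
    have h6 := pp_lip x y
    linarith
  · rintro - ⟨x, rfl⟩
    show Tendsto _ atTop (nhds 0)
    rw [NormedAddCommGroup.tendsto_nhds_zero]
    intro ε hε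
    have hlt : limsup (fun n => |x n|) atTop < pp x + ε := by
      have := pp_nonneg x; unfold pp; linarith [lt_add_of_pos_right (pp x) hε]
    filter_upwards [eventually_lt_of_limsup_lt hlt (bddU x)] with n hn
    rw [Real.norm_eq_abs]
    exact key2 (pp x) (x n) ε (pp_nonneg x) hε hn
  · intro x hx
    have h0 : pp x = 0 := pp_eq_zero x hx
    apply Subtype.ext
    funext n
    show x n - max (-(pp x)) (min (pp x) (x n)) = x n
    rw [h0, neg_zero, max_eq_left (min_le_left 0 (x n)), sub_zero]
end

section
/- Let X be a real Banach space and K a nonempty compact convex subset of X. Then K is a uniform retract of X: there exists a uniformly continuous map r : X → X whose range is contained in K and which satisfies r(x) = x for every x ∈ K. -/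
open scoped InnerProductSpace ENNReal


lemma hilbert_proj {H : Type*} [NormedAddCommGroup H] [InnerProductSpace ℝ H]
    (C : Set H) (hne : C.Nonempty) (hC : IsCompact C) (hconv : Convex ℝ C) :
    ∃ P : H → H, LipschitzWith 1 P ∧ (∀ u, P u ∈ C) ∧ ∀ u ∈ C, P u = u := by
  have hcomp : IsComplete C := hC.isComplete
  have hex : ∀ u : H, ∃ v, v ∈ C ∧ ‖u - v‖ = ⨅ w : C, ‖u - w‖ := fun u => by
    obtain ⟨v, hv, h⟩ := exists_norm_eq_iInf_of_complete_convex hne hcomp hconv u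
    exact ⟨v, hv, h⟩
  choose P hPmem hPeq using hex
  have key : ∀ u, ∀ w ∈ C, ⟪u - P u, w - P u⟫_ℝ ≤ (0:ℝ) := fun u =>
    (norm_eq_iInf_iff_real_inner_le_zero hconv (hPmem u)).1 (hPeq u)
  refine ⟨P, ?_, hPmem, ?_⟩
  · refine LipschitzWith.of_dist_le_mul fun u u' => ?_
    set v := P u with hv
    set w := P u' with hw
    have e1 : ⟪u - v, w - v⟫_ℝ ≤ (0:ℝ) := key u w (hPmem u')
    have e2 : ⟪u' - w, v - w⟫_ℝ ≤ (0:ℝ) := key u' v (hPmem u)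
    have e2' : ⟪w - u', w - v⟫_ℝ ≤ (0:ℝ) := by
      rw [show w - u' = -(u' - w) by abel, show w - v = -(v - w) by abel, inner_neg_neg]
      exact e2
    have expand : ⟪w - v, w - v⟫_ℝ
        = ⟪w - u', w - v⟫_ℝ + ⟪u' - u, w - v⟫_ℝ + ⟪u - v, w - v⟫_ℝ := by
      rw [← inner_add_left, ← inner_add_left]
      congr 1
      abel
    have hcs := real_inner_le_norm (u' - u) (w - v)
    have hs : ⟪w - v, w - v⟫_ℝ = ‖w - v‖ ^ 2 := real_inner_self_eq_norm_sq (w - v)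
    have hsq : ‖w - v‖ ^ 2 ≤ ‖u' - u‖ * ‖w - v‖ := by nlinarith
    have hfin : ‖w - v‖ ≤ ‖u' - u‖ := by
      rcases (norm_nonneg (w - v)).eq_or_lt' with h0 | h0
      · rw [h0]; positivity
      · have := le_of_mul_le_mul_right (by nlinarith : ‖w - v‖ * ‖w - v‖ ≤ ‖u' - u‖ * ‖w - v‖) h0
        exact this
    rw [dist_eq_norm, dist_eq_norm]
    simp only [NNReal.coe_one, one_mul]
    rw [norm_sub_rev, norm_sub_rev u]
    exact hfin
  · intro u hu
    have h := key u u hu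
    have hs : ⟪u - P u, u - P u⟫_ℝ = ‖u - P u‖ ^ 2 := real_inner_self_eq_norm_sq _
    have : ‖u - P u‖ ^ 2 ≤ 0 := hs ▸ h
    have : u - P u = 0 := by
      have := norm_nonneg (u - P u)
      have hnz : ‖u - P u‖ = 0 := by nlinarith
      exact norm_eq_zero.1 hnz
    exact (sub_eq_zero.mp this).symm


lemma exists_sep_embedding {X : Type*} [NormedAddCommGroup X] [NormedSpace ℝ X]
    (K : Set X) (hne : K.Nonempty) (hK : IsCompact K) :
    ∃ T : X →L[ℝ] lp (fun _ : ℕ => ℝ) 2, Set.InjOn T K := by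
  classical
  obtain ⟨c, hc_count, hc_sub⟩ := hK.isSeparable
  have hc_ne : c.Nonempty := by
    rcases hne with ⟨x, hx⟩
    by_contra h
    rw [Set.not_nonempty_iff_eq_empty] at h
    simp [h] at hc_sub
    exact hc_sub.subset hx
  obtain ⟨d, hd⟩ := hc_count.exists_eq_range hc_ne
  have hdense : K ⊆ closure (Set.range d) := hd ▸ hc_sub
  -- separating functionals
  have hdual : ∀ p : ℕ × ℕ, ∃ g : X →L[ℝ] ℝ,
      ‖g‖ ≤ 1 ∧ g (d p.1 - d p.2) = ‖d p.1 - d p.2‖ := fun p =>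
    exists_dual_vector'' ℝ (d p.1 - d p.2)
  choose f hf1 hf2 using hdual
  set e : ℕ ≃ ℕ × ℕ := (Denumerable.eqv (ℕ × ℕ)).symm with he
  set F : X → ℕ → ℝ := fun x n => (2:ℝ)⁻¹ ^ n * f (e n) x with hF
  have hFle : ∀ x n, ‖F x n‖ ≤ (2:ℝ)⁻¹ ^ n * ‖x‖ := by
    intro x n
    have h1 : ‖f (e n) x‖ ≤ ‖f (e n)‖ * ‖x‖ := (f (e n)).le_opNorm x
    have h2 : ‖f (e n)‖ * ‖x‖ ≤ 1 * ‖x‖ :=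
      mul_le_mul_of_nonneg_right (hf1 _) (norm_nonneg x)
    have h3 : ‖F x n‖ = (2:ℝ)⁻¹ ^ n * ‖f (e n) x‖ := by
      rw [hF]; simp [norm_mul, abs_of_nonneg (by positivity : (0:ℝ) ≤ (2:ℝ)⁻¹ ^ n)]
    rw [h3]
    calc (2:ℝ)⁻¹ ^ n * ‖f (e n) x‖ ≤ (2:ℝ)⁻¹ ^ n * (1 * ‖x‖) := by
          apply mul_le_mul_of_nonneg_left (h1.trans h2) (by positivity)
      _ = (2:ℝ)⁻¹ ^ n * ‖x‖ := by ring
  have hpowsq : ∀ n : ℕ, ((2:ℝ)⁻¹ ^ n) ^ 2 = ((4:ℝ)⁻¹) ^ n := by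
    intro n
    rw [← pow_mul, mul_comm, pow_mul]
    norm_num
  have hsum_geom : Summable (fun n : ℕ => ((4:ℝ)⁻¹) ^ n) :=
    summable_geometric_of_lt_one (by norm_num) (by norm_num)
  have hsummable : ∀ x, Summable (fun n => ‖F x n‖ ^ 2) := by
    intro x
    apply Summable.of_nonneg_of_le (fun n => by positivity)
      (fun n => ?_) (hsum_geom.mul_left (‖x‖ ^ 2))
    calc ‖F x n‖ ^ 2 ≤ ((2:ℝ)⁻¹ ^ n * ‖x‖) ^ 2 := by
          apply pow_le_pow_left₀ (norm_nonneg _) (hFle x n)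
      _ = ‖x‖ ^ 2 * ((4:ℝ)⁻¹) ^ n := by rw [mul_pow, hpowsq]; ring
  have htoReal : ((2:ℝ≥0∞)).toReal = ((2:ℕ):ℝ) := by norm_num
  have hmem : ∀ x, Memℓp (F x) 2 := by
    intro x
    apply memℓp_gen
    convert hsummable x using 2 with n
    rw [htoReal, Real.rpow_natCast]
  -- linear map
  set Tl : X →ₗ[ℝ] lp (fun _ : ℕ => ℝ) 2 :=
    { toFun := fun x => ⟨F x, hmem x⟩
      map_add' := by
        intro x y
        apply Subtype.ext
        rw [lp.coeFn_add]
        funext n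
        show F (x + y) n = F x n + F y n
        simp [hF, map_add]
        ring
      map_smul' := by
        intro a x
        apply Subtype.ext
        rw [lp.coeFn_smul]
        funext n
        show F (a • x) n = a • F x n
        simp [hF, map_smul]
        ring } with hTl
  have hTl_apply : ∀ x n, (Tl x : ∀ _ : ℕ, ℝ) n = F x n := fun x n => rfl
  have hbound : ∀ x, ‖Tl x‖ ≤ 2 * ‖x‖ := by
    intro x
    have h2 : (0:ℝ) < ((2:ℝ≥0∞)).toReal := by norm_num
    have hnorm := lp.norm_rpow_eq_tsum h2 (Tl x)
    have hnorm' : ‖Tl x‖ ^ 2 = ∑' n, ‖F x n‖ ^ 2 := by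
      have := hnorm
      rw [htoReal] at this
      simp only [Real.rpow_natCast] at this
      simpa [hTl_apply] using this
    have htsum_le : ∑' n, ‖F x n‖ ^ 2 ≤ ‖x‖ ^ 2 * (4:ℝ)/3 := by
      have h1 : ∑' n, ‖F x n‖ ^ 2 ≤ ∑' n : ℕ, ‖x‖ ^ 2 * ((4:ℝ)⁻¹) ^ n := by
        apply Summable.tsum_le_tsum _ (hsummable x) (hsum_geom.mul_left _)
        intro n
        calc ‖F x n‖ ^ 2 ≤ ((2:ℝ)⁻¹ ^ n * ‖x‖) ^ 2 :=
              pow_le_pow_left₀ (norm_nonneg _) (hFle x n) 2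
          _ = ‖x‖ ^ 2 * ((4:ℝ)⁻¹) ^ n := by rw [mul_pow, hpowsq]; ring
      have h2' : ∑' n : ℕ, ‖x‖ ^ 2 * ((4:ℝ)⁻¹) ^ n = ‖x‖ ^ 2 * ((1:ℝ) - 4⁻¹)⁻¹ := by
        rw [tsum_mul_left, tsum_geometric_of_lt_one (by norm_num) (by norm_num)]
      rw [h2'] at h1
      calc ∑' n, ‖F x n‖ ^ 2 ≤ ‖x‖ ^ 2 * ((1:ℝ) - 4⁻¹)⁻¹ := h1
        _ = ‖x‖ ^ 2 * (4:ℝ)/3 := by norm_num; ring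
    have hsq : ‖Tl x‖ ^ 2 ≤ (2 * ‖x‖) ^ 2 := by
      rw [hnorm']
      nlinarith [htsum_le, sq_nonneg ‖x‖]
    nlinarith [norm_nonneg (Tl x), norm_nonneg x, hsq]
  set T : X →L[ℝ] lp (fun _ : ℕ => ℝ) 2 := Tl.mkContinuous 2 hbound with hT
  refine ⟨T, ?_⟩
  intro x hx y hy hxy
  by_contra hne'
  have hcoord : ∀ p : ℕ × ℕ, f p x = f p y := by
    intro p
    have hfun : ∀ n, F x n = F y n := by
      intro n
      have : (Tl x : ∀ _ : ℕ, ℝ) n = (Tl y : ∀ _ : ℕ, ℝ) n := by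
        have : Tl x = Tl y := hxy
        rw [this]
      simpa [hTl_apply] using this
    have := hfun (e.symm p)
    rw [hF] at this
    simp only [Equiv.apply_symm_apply] at this
    have hne2 : ((2:ℝ)⁻¹ ^ (e.symm p) : ℝ) ≠ 0 := by positivity
    exact mul_left_cancel₀ hne2 this
  set ε : ℝ := ‖x - y‖ / 4 with hεdef
  have hεpos : 0 < ε := by
    have : x ≠ y := hne'
    have : ‖x - y‖ ≠ 0 := fun h => this (sub_eq_zero.mp (norm_eq_zero.mp h))
    have := (norm_nonneg (x - y)).lt_of_ne' this
    positivity
  obtain ⟨di, ⟨i, rfl⟩, hdi⟩ := Metric.mem_closure_iff.mp (hdense hx) ε hεpos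
  obtain ⟨dj, ⟨j, rfl⟩, hdj⟩ := Metric.mem_closure_iff.mp (hdense hy) ε hεpos
  have hfp := hf2 (i, j)
  simp only at hfp
  have habs : ∀ z : X, f (i, j) z ≤ ‖z‖ := by
    intro z
    have h1 : ‖f (i, j) z‖ ≤ ‖f (i, j)‖ * ‖z‖ := (f (i, j)).le_opNorm z
    have h2 : ‖f (i, j)‖ * ‖z‖ ≤ 1 * ‖z‖ :=
      mul_le_mul_of_nonneg_right (hf1 _) (norm_nonneg z)
    calc f (i, j) z ≤ ‖f (i, j) z‖ := le_abs_self _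
      _ ≤ 1 * ‖z‖ := h1.trans h2
      _ = ‖z‖ := one_mul _
  have hsplit : ‖d i - d j‖ = f (i, j) (d i - x) + (f (i, j) x - f (i, j) y)
      + f (i, j) (y - d j) := by
    rw [← hfp]
    simp only [map_sub]
    ring
  have hb1 : f (i, j) (d i - x) ≤ ε := by
    have := habs (d i - x)
    have h' : ‖d i - x‖ < ε := by rwa [dist_eq_norm, norm_sub_rev] at hdi
    linarith
  have hb2 : f (i, j) (y - d j) ≤ ε := by
    have := habs (y - d j)
    have h' : ‖y - d j‖ < ε := by rwa [dist_eq_norm] at hdj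
    linarith
  have hub : ‖d i - d j‖ ≤ 2 * ε := by
    rw [hsplit, hcoord (i, j)]
    linarith
  have hlb : ‖x - y‖ ≤ ‖x - d i‖ + ‖d i - d j‖ + ‖d j - y‖ := by
    have := dist_triangle4 x (d i) (d j) y
    simpa [dist_eq_norm] using this
  have hxd : ‖x - d i‖ < ε := by rwa [dist_eq_norm] at hdi
  have hyd : ‖d j - y‖ < ε := by rwa [dist_eq_norm, norm_sub_rev] at hdj
  have : ‖x - y‖ < 4 * ε := by linarith
  rw [hεdef] at this
  linarith


/-- Every nonempty compact convex subset of a real Banach space is a uniform retract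
of the space. -/
theorem compact_convex_uniform_retract
    {X : Type*} [NormedAddCommGroup X] [NormedSpace ℝ X] [CompleteSpace X]
    (K : Set X) (hne : K.Nonempty) (hK : IsCompact K) (hconv : Convex ℝ K) :
    ∃ r : X → X, UniformContinuous r ∧ Set.range r ⊆ K ∧ ∀ x ∈ K, r x = x := by
  classical
  obtain ⟨T, hTinj⟩ := exists_sep_embedding K hne hK
  set C : Set (lp (fun _ : ℕ => ℝ) 2) := T '' K with hC
  have hCcomp : IsCompact C := hK.image T.continuous
  have hCconv : Convex ℝ C := by
    have := hconv.linear_image (T : X →ₗ[ℝ] lp (fun _ : ℕ => ℝ) 2)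
    simpa [hC] using this
  have hCne : C.Nonempty := hne.image T
  obtain ⟨P, hPlip, hPmem, hPfix⟩ := hilbert_proj C hCne hCcomp hCconv
  haveI : CompactSpace K := isCompact_iff_compactSpace.mp hK
  haveI : CompactSpace C := isCompact_iff_compactSpace.mp hCcomp
  let φ : K → C := fun k => ⟨T k, ⟨(k : X), k.2, rfl⟩⟩
  have hφcont : Continuous φ :=
    Continuous.subtype_mk (T.continuous.comp continuous_subtype_val) _
  have hφbij : Function.Bijective φ := by
    constructor
    · intro a b hab
      have : T (a : X) = T (b : X) := congrArg Subtype.val hab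
      exact Subtype.ext (hTinj a.2 b.2 this)
    · rintro ⟨cval, k, hk, hTk⟩
      exact ⟨⟨k, hk⟩, Subtype.ext hTk⟩
  let eqv : K ≃ C := Equiv.ofBijective φ hφbij
  have heqv_cont : Continuous eqv := hφcont
  let h : K ≃ₜ C := heqv_cont.homeoOfEquivCompactToT2
  refine ⟨fun x => ((h.symm ⟨P (T x), hPmem (T x)⟩ : K) : X), ?_, ?_, ?_⟩
  · have hTuc : UniformContinuous (⇑T) := T.uniformContinuous
    have hPuc : UniformContinuous P := hPlip.uniformContinuous
    have h1 : UniformContinuous (fun x => (⟨P (T x), hPmem (T x)⟩ : C)) :=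
      (hPuc.comp hTuc).subtype_mk _
    have h2 : UniformContinuous (⇑h.symm : C → K) :=
      CompactSpace.uniformContinuous_of_continuous h.symm.continuous
    exact uniformContinuous_subtype_val.comp (h2.comp h1)
  · rintro _ ⟨x, rfl⟩
    exact (h.symm ⟨P (T x), hPmem (T x)⟩).2
  · intro x hx
    have hTx : T x ∈ C := ⟨x, hx, rfl⟩
    have hfix : P (T x) = T x := hPfix _ hTx
    have key : (⟨P (T x), hPmem (T x)⟩ : C) = h ⟨x, hx⟩ := by
      apply Subtype.ext
      exact hfix
    show ((h.symm ⟨P (T x), hPmem (T x)⟩ : K) : X) = x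
    rw [key, h.symm_apply_apply]
end

section
/- Let X be a separable real Banach space and let 0 < α < 1. Then there exists a nonempty compact convex subset K of X which generates X (the closed linear span of K equals X) and which is an α-Hölder retract of X: there exist a constant C ≥ 0 and a map r : X → X with ‖r(x) − r(y)‖ ≤ C‖x − y‖^α for all x, y ∈ X, whose range is contained in K, and with r(x) = x for every x ∈ K. -/
open Set Submodule

noncomputable def clipR (ε a : ℝ) : ℝ := max 0 (min ε a)

lemma clipR_nonneg (ε a : ℝ) : 0 ≤ clipR ε a := le_max_left _ _

lemma clipR_le {ε : ℝ} (hε : 0 ≤ ε) (a : ℝ) : clipR ε a ≤ ε :=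
  max_le hε (min_le_left _ _)

lemma clipR_eq {ε a : ℝ} (h0 : 0 ≤ a) (h1 : a ≤ ε) : clipR ε a = a := by
  simp [clipR, min_eq_right h1, max_eq_right h0]

lemma clipR_lip (ε a b : ℝ) : |clipR ε a - clipR ε b| ≤ |a - b| := by
  have h1 : |min ε a - min ε b| ≤ |a - b| := by
    have := abs_min_sub_min_le_max ε a ε b
    simpa using this
  have h2 : |max 0 (min ε a) - max 0 (min ε b)| ≤ |min ε a - min ε b| := by
    have := abs_max_sub_max_le_abs (min ε a) (min ε b) 0
    simpa [max_comm] using this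
  exact h2.trans h1

lemma clipR_diff_le {ε : ℝ} (hε : 0 ≤ ε) (a b : ℝ) : |clipR ε a - clipR ε b| ≤ ε := by
  rw [abs_sub_le_iff]
  constructor <;>
    nlinarith [clipR_nonneg ε a, clipR_nonneg ε b, clipR_le hε a, clipR_le hε b]

lemma continuous_clipR (ε : ℝ) : Continuous (clipR ε) :=
  continuous_const.max (continuous_const.min continuous_id)

lemma min_le_rpow_mul {a b γ : ℝ} (ha : 0 ≤ a) (hb : 0 ≤ b) (h0 : 0 ≤ γ) (h1 : γ ≤ 1) :
    min a b ≤ a ^ (1 - γ) * b ^ γ := by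
  rcases le_total a b with h | h
  · rw [min_eq_left h]
    calc a = a ^ ((1 - γ) + γ) := by norm_num
    _ = a ^ (1 - γ) * a ^ γ := Real.rpow_add' ha (by norm_num)
    _ ≤ a ^ (1 - γ) * b ^ γ :=
        mul_le_mul_of_nonneg_left (Real.rpow_le_rpow ha h h0) (Real.rpow_nonneg ha _)
  · rw [min_eq_right h]
    calc b = b ^ ((1 - γ) + γ) := by norm_num
    _ = b ^ (1 - γ) * b ^ γ := Real.rpow_add' hb (by norm_num)
    _ ≤ a ^ (1 - γ) * b ^ γ :=
        mul_le_mul_of_nonneg_right (Real.rpow_le_rpow hb h (by linarith))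
          (Real.rpow_nonneg hb _)

section Aux
variable {X : Type*} [NormedAddCommGroup X] [NormedSpace ℝ X]

lemma exists_functional (E : Submodule ℝ X) (hE : IsClosed (E : Set X)) {v : X} (hv : v ∉ E) :
    ∃ f : X →L[ℝ] ℝ, f v = 1 ∧ ∀ x ∈ E, f x = 0 := by
  obtain ⟨f, u, hfu, huv⟩ := geometric_hahn_banach_closed_point (E.convex) hE hv
  have hE0 : ∀ x ∈ E, f x = 0 := by
    intro x hx
    by_contra h
    have := hfu (((|u| + 1) / f x) • x) (E.smul_mem _ hx)
    rw [map_smul, smul_eq_mul, div_mul_cancel₀ _ h] at this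
    have : u ≤ |u| := le_abs_self u
    linarith
  have hu0 : 0 < u := by simpa using hfu 0 E.zero_mem
  have hfv : f v ≠ 0 := by intro h; rw [h] at huv; linarith
  refine ⟨(f v)⁻¹ • f, ?_, fun x hx => ?_⟩
  · simp [inv_mul_cancel₀ hfv]
  · simp [hE0 x hx]

open Classical in
/-- One step of the biorthogonal construction. -/
noncomputable def nextPair (prev : ℕ → X × (X →L[ℝ] ℝ)) (n : ℕ) (v : X) : X × (X →L[ℝ] ℝ) :=
  if h : v ∈ span ℝ ((fun i => (prev i).1) '' Iio n) then (0, 0)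
  else
    let w := v - ∑ i ∈ Finset.range n, ((prev i).2 v) • (prev i).1
    have hEfin : FiniteDimensional ℝ (span ℝ ((fun i => (prev i).1) '' Iio n)) :=
      FiniteDimensional.span_of_finite ℝ ((Set.finite_Iio n).image _)
    have hsum : (∑ i ∈ Finset.range n, ((prev i).2 v) • (prev i).1) ∈
        span ℝ ((fun i => (prev i).1) '' Iio n) :=
      Submodule.sum_mem _ fun i hi => Submodule.smul_mem _ _
        (subset_span ⟨i, Finset.mem_range.mp hi, rfl⟩)
    have hw : w ∉ span ℝ ((fun i => (prev i).1) '' Iio n) := fun hmem => h (by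
      have : w + (∑ i ∈ Finset.range n, ((prev i).2 v) • (prev i).1) = v := by
        simp [w]
      rw [← this]; exact Submodule.add_mem _ hmem hsum)
    have hw0 : w ≠ 0 := fun h0 => hw (h0 ▸ Submodule.zero_mem _)
    have he : ‖w‖⁻¹ • w ∉ span ℝ ((fun i => (prev i).1) '' Iio n) := fun hmem => hw (by
      have : ‖w‖ • (‖w‖⁻¹ • w) = w := by
        rw [smul_smul, mul_inv_cancel₀ (norm_ne_zero_iff.mpr hw0), one_smul]
      rw [← this]; exact Submodule.smul_mem _ _ hmem)
    (‖w‖⁻¹ • w,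
      Classical.choose (exists_functional _
        (Submodule.closed_of_finiteDimensional _) he))

lemma nextPair_pos (prev : ℕ → X × (X →L[ℝ] ℝ)) (n : ℕ) (v : X)
    (h : v ∈ span ℝ ((fun i => (prev i).1) '' Iio n)) : nextPair prev n v = (0, 0) := by
  rw [nextPair, dif_pos h]

lemma nextPair_neg (prev : ℕ → X × (X →L[ℝ] ℝ)) (n : ℕ) (v : X)
    (h : v ∉ span ℝ ((fun i => (prev i).1) '' Iio n)) :
    (v - ∑ i ∈ Finset.range n, ((prev i).2 v) • (prev i).1) ≠ 0 ∧
    (nextPair prev n v).1 =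
      ‖v - ∑ i ∈ Finset.range n, ((prev i).2 v) • (prev i).1‖⁻¹ •
        (v - ∑ i ∈ Finset.range n, ((prev i).2 v) • (prev i).1) ∧
    ‖(nextPair prev n v).1‖ = 1 ∧
    (nextPair prev n v).2 (nextPair prev n v).1 = 1 ∧
    (∀ x ∈ span ℝ ((fun i => (prev i).1) '' Iio n), (nextPair prev n v).2 x = 0) := by
  rw [nextPair, dif_neg h]
  set w := v - ∑ i ∈ Finset.range n, ((prev i).2 v) • (prev i).1 with hw_def
  have hsum : (∑ i ∈ Finset.range n, ((prev i).2 v) • (prev i).1) ∈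
      span ℝ ((fun i => (prev i).1) '' Iio n) :=
    Submodule.sum_mem _ fun i hi => Submodule.smul_mem _ _
      (subset_span ⟨i, Finset.mem_range.mp hi, rfl⟩)
  have hw : w ∉ span ℝ ((fun i => (prev i).1) '' Iio n) := fun hmem => h (by
    have : w + (∑ i ∈ Finset.range n, ((prev i).2 v) • (prev i).1) = v := by simp [hw_def]
    rw [← this]; exact Submodule.add_mem _ hmem hsum)
  have hw0 : w ≠ 0 := fun h0 => hw (h0 ▸ Submodule.zero_mem _)
  have he : ‖w‖⁻¹ • w ∉ span ℝ ((fun i => (prev i).1) '' Iio n) := fun hmem => hw (by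
    have : ‖w‖ • (‖w‖⁻¹ • w) = w := by
      rw [smul_smul, mul_inv_cancel₀ (norm_ne_zero_iff.mpr hw0), one_smul]
    rw [← this]; exact Submodule.smul_mem _ _ hmem)
  haveI : FiniteDimensional ℝ (span ℝ ((fun i => (prev i).1) '' Iio n)) :=
    FiniteDimensional.span_of_finite ℝ ((Set.finite_Iio n).image _)
  have hspec := Classical.choose_spec (exists_functional
    (span ℝ ((fun i => (prev i).1) '' Iio n)) (Submodule.closed_of_finiteDimensional _) he)
  refine ⟨hw0, rfl, ?_, hspec.1, hspec.2⟩
  rw [norm_smul, norm_inv, norm_norm, inv_mul_cancel₀ (norm_ne_zero_iff.mpr hw0)]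

noncomputable def bioAux (u : ℕ → X) : ℕ → ℕ → X × (X →L[ℝ] ℝ)
  | 0 => fun _ => (0, 0)
  | n + 1 => Function.update (bioAux u n) n (nextPair (bioAux u n) n (u n))

noncomputable def bioE (u : ℕ → X) (n : ℕ) : X := (bioAux u (n + 1) n).1
noncomputable def bioF (u : ℕ → X) (n : ℕ) : X →L[ℝ] ℝ := (bioAux u (n + 1) n).2

lemma bioAux_stable (u : ℕ → X) {i n m : ℕ} (hi : i < n) (hnm : n ≤ m) :
    bioAux u m i = bioAux u n i := by
  induction m with
  | zero => omega
  | succ k ih =>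
    rcases Nat.lt_or_ge n (k + 1) with hk | hk
    · have hik : i ≠ k := by omega
      rw [bioAux, Function.update_of_ne hik, ih (by omega)]
    · have : n = k + 1 := by omega
      rw [this]

lemma bioAux_eq (u : ℕ → X) {i m : ℕ} (hi : i < m) :
    bioAux u m i = (bioE u i, bioF u i) := by
  rw [bioAux_stable u (Nat.lt_succ_self i) hi, bioE, bioF]

lemma bio_def (u : ℕ → X) (n : ℕ) :
    (bioE u n, bioF u n) = nextPair (bioAux u n) n (u n) := by
  rw [bioE, bioF]
  have : bioAux u (n + 1) n = nextPair (bioAux u n) n (u n) := by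
    rw [bioAux, Function.update_self]
  rw [this]

end Aux

section Bio
variable {X : Type*} [NormedAddCommGroup X] [NormedSpace ℝ X] (u : ℕ → X)

lemma bio_image_eq (n : ℕ) :
    (fun i => (bioAux u n i).1) '' Iio n = bioE u '' Iio n := by
  apply Set.image_congr
  intro i hi
  rw [bioAux_eq u (mem_Iio.mp hi)]

lemma bio_pos {n : ℕ} (h : u n ∈ span ℝ (bioE u '' Iio n)) :
    bioE u n = 0 ∧ bioF u n = 0 := by
  have hd := bio_def u n
  rw [nextPair_pos _ _ _ (by rw [bio_image_eq]; exact h)] at hd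
  exact ⟨congrArg Prod.fst hd, congrArg Prod.snd hd⟩

lemma bio_neg {n : ℕ} (h : u n ∉ span ℝ (bioE u '' Iio n)) :
    (u n - ∑ i ∈ Finset.range n, (bioF u i (u n)) • bioE u i) ≠ 0 ∧
    bioE u n = ‖u n - ∑ i ∈ Finset.range n, (bioF u i (u n)) • bioE u i‖⁻¹ •
      (u n - ∑ i ∈ Finset.range n, (bioF u i (u n)) • bioE u i) ∧
    ‖bioE u n‖ = 1 ∧
    bioF u n (bioE u n) = 1 ∧
    (∀ x ∈ span ℝ (bioE u '' Iio n), bioF u n x = 0) := by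
  have hsum : ∑ i ∈ Finset.range n, ((bioAux u n i).2 (u n)) • (bioAux u n i).1
      = ∑ i ∈ Finset.range n, (bioF u i (u n)) • bioE u i := by
    refine Finset.sum_congr rfl fun i hi => ?_
    rw [bioAux_eq u (Finset.mem_range.mp hi)]
  have hnp := nextPair_neg (bioAux u n) n (u n)
    (by rw [bio_image_eq]; exact h)
  rw [hsum, bio_image_eq] at hnp
  have hd := bio_def u n
  have he : bioE u n = (nextPair (bioAux u n) n (u n)).1 := congrArg Prod.fst hd
  have hf : bioF u n = (nextPair (bioAux u n) n (u n)).2 := congrArg Prod.snd hd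
  rw [← he, ← hf] at hnp
  exact hnp

lemma bioE_norm_le (n : ℕ) : ‖bioE u n‖ ≤ 1 := by
  by_cases h : u n ∈ span ℝ (bioE u '' Iio n)
  · rw [(bio_pos u h).1]; simp
  · rw [(bio_neg u h).2.2.1]

lemma bioF_eq_zero {n : ℕ} (h : bioE u n = 0) : bioF u n = 0 := by
  by_cases hc : u n ∈ span ℝ (bioE u '' Iio n)
  · exact (bio_pos u hc).2
  · exact absurd ((bio_neg u hc).2.2.1) (by rw [h]; simp)

lemma bioF_self {n : ℕ} (h : bioE u n ≠ 0) : bioF u n (bioE u n) = 1 := by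
  by_cases hc : u n ∈ span ℝ (bioE u '' Iio n)
  · exact absurd (bio_pos u hc).1 h
  · exact (bio_neg u hc).2.2.2.1

lemma bioF_prev {i n : ℕ} (h : i < n) : bioF u n (bioE u i) = 0 := by
  by_cases hc : u n ∈ span ℝ (bioE u '' Iio n)
  · rw [(bio_pos u hc).2]; rfl
  · exact (bio_neg u hc).2.2.2.2 _ (subset_span ⟨i, mem_Iio.mpr h, rfl⟩)

lemma bio_u_mem (n : ℕ) : u n ∈ span ℝ (Set.range (bioE u)) := by
  by_cases hc : u n ∈ span ℝ (bioE u '' Iio n)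
  · exact span_mono (image_subset_range _ _) hc
  · obtain ⟨hw0, he, -, -, -⟩ := bio_neg u hc
    set w := u n - ∑ i ∈ Finset.range n, (bioF u i (u n)) • bioE u i with hw_def
    have hwe : w = ‖w‖ • bioE u n := by
      rw [he, smul_smul, mul_inv_cancel₀ (norm_ne_zero_iff.mpr hw0), one_smul]
    have : u n = w + ∑ i ∈ Finset.range n, (bioF u i (u n)) • bioE u i := by
      simp [hw_def]
    rw [this, hwe]
    refine Submodule.add_mem _ (Submodule.smul_mem _ _ (subset_span (mem_range_self n)))
      (Submodule.sum_mem _ fun i _ => Submodule.smul_mem _ _ (subset_span (mem_range_self i)))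

lemma bioF_ne : ∀ m n : ℕ, n ≠ m → bioF u n (bioE u m) = 0 := by
  intro m
  induction m using Nat.strong_induction_on with
  | _ m ih =>
    intro n hnm
    rcases Nat.lt_or_ge m n with hlt | hge
    · exact bioF_prev u hlt
    · have hnm' : n < m := by omega
      by_cases hz : bioE u n = 0
      · rw [bioF_eq_zero u hz]; rfl
      by_cases hc : u m ∈ span ℝ (bioE u '' Iio m)
      · rw [(bio_pos u hc).1]; exact map_zero _
      · obtain ⟨hw0, he, -, -, -⟩ := bio_neg u hc
        rw [he, map_smul, smul_eq_mul]
        have hfw : bioF u n (u m - ∑ i ∈ Finset.range m, (bioF u i (u m)) • bioE u i) = 0 := by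
          rw [map_sub, map_sum]
          have : ∑ i ∈ Finset.range m, bioF u n ((bioF u i (u m)) • bioE u i)
              = ∑ i ∈ Finset.range m, if i = n then bioF u n (u m) else 0 := by
            refine Finset.sum_congr rfl fun i hi => ?_
            rw [map_smul, smul_eq_mul]
            by_cases hin : i = n
            · rw [hin, bioF_self u hz, mul_one, if_pos rfl]
            · rw [if_neg hin]
              rcases Nat.lt_or_ge i n with h1 | h1
              · rw [bioF_prev u h1, mul_zero]
              · have : n < i := by omega
                rw [ih i (Finset.mem_range.mp hi) n (by omega), mul_zero]
          rw [this, Finset.sum_ite_eq' (Finset.range m) n,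
            if_pos (Finset.mem_range.mpr hnm'), sub_self]
        rw [hfw, mul_zero]

end Bio

/-- In every separable real Banach space `X` and for every `0 < α < 1`, there is a
compact convex generating subset of `X` which is an `α`-Hölder retract of `X`. -/
theorem exists_generating_compact_convex_holder_retract
    {X : Type*} [NormedAddCommGroup X] [NormedSpace ℝ X] [CompleteSpace X]
    [TopologicalSpace.SeparableSpace X] (α : ℝ) (hα₀ : 0 < α) (hα₁ : α < 1) :
    ∃ K : Set X, K.Nonempty ∧ IsCompact K ∧ Convex ℝ K ∧
      (Submodule.span ℝ K).topologicalClosure = ⊤ ∧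
      ∃ (C : ℝ) (r : X → X), 0 ≤ C ∧
        (∀ x y : X, ‖r x - r y‖ ≤ C * ‖x - y‖ ^ α) ∧
        Set.range r ⊆ K ∧ ∀ x ∈ K, r x = x := by
  classical
  haveI : Nonempty X := ⟨0⟩
  obtain ⟨u, hu⟩ := TopologicalSpace.exists_dense_seq X
  set e : ℕ → X := bioE u with he_def
  set f : ℕ → X →L[ℝ] ℝ := bioF u with hf_def
  have hα1' : (0:ℝ) < 1 - α := by linarith
  -- the weights
  set m : ℕ → ℝ := fun n => max 1 ‖f n‖ with hm_def
  have hm1 : ∀ n, (1:ℝ) ≤ m n := fun n => le_max_left _ _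
  have hm_pos : ∀ n, (0:ℝ) < m n := fun n => lt_of_lt_of_le one_pos (hm1 n)
  have hfm : ∀ n, ‖f n‖ ≤ m n := fun n => le_max_right _ _
  set a : ℕ → ℝ := fun n => (2:ℝ) ^ (-(n:ℝ)) * (m n) ^ (-α) with ha_def
  have ha_pos : ∀ n, 0 < a n := fun n =>
    mul_pos (Real.rpow_pos_of_pos two_pos _) (Real.rpow_pos_of_pos (hm_pos n) _)
  have h2n : ∀ n : ℕ, (2:ℝ) ^ (-(n:ℝ)) = (1/2:ℝ) ^ n := by
    intro n
    rw [Real.rpow_neg (by norm_num), Real.rpow_natCast, one_div, inv_pow]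
  have ha_le : ∀ n, a n ≤ (1/2:ℝ) ^ n := by
    intro n
    rw [← h2n n]
    calc a n ≤ (2:ℝ) ^ (-(n:ℝ)) * 1 := by
          refine mul_le_mul_of_nonneg_left ?_ (Real.rpow_pos_of_pos two_pos _).le
          exact Real.rpow_le_one_of_one_le_of_nonpos (hm1 n) (by linarith)
    _ = (2:ℝ) ^ (-(n:ℝ)) := mul_one _
  have ha_le1 : ∀ n, a n ≤ 1 := by
    intro n
    refine (ha_le n).trans ?_
    exact pow_le_one₀ (by norm_num) (by norm_num)
  set ε : ℕ → ℝ := fun n => (a n) ^ (1/(1-α)) with hε_def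
  have hε_pos : ∀ n, 0 < ε n := fun n => Real.rpow_pos_of_pos (ha_pos n) _
  have hβ : (1:ℝ) ≤ 1/(1-α) := by
    rw [le_div_iff₀ hα1']
    linarith
  have hε_le_a : ∀ n, ε n ≤ a n := by
    intro n
    have := Real.rpow_le_rpow_of_exponent_ge (ha_pos n) (ha_le1 n) hβ
    rwa [Real.rpow_one] at this
  have hε_le : ∀ n, ε n ≤ (1/2:ℝ) ^ n := fun n => (hε_le_a n).trans (ha_le n)
  have hkey : ∀ n, ε n ^ (1-α) * (m n) ^ α = (1/2:ℝ) ^ n := by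
    intro n
    have h1 : ε n ^ (1-α) = a n := by
      rw [hε_def]
      rw [← Real.rpow_mul (ha_pos n).le, one_div, inv_mul_cancel₀ (by linarith : (1:ℝ)-α ≠ 0),
        Real.rpow_one]
    rw [h1, ha_def]
    rw [mul_assoc, ← Real.rpow_add (hm_pos n), neg_add_cancel, Real.rpow_zero, mul_one, h2n]
  have he_norm : ∀ n, ‖e n‖ ≤ 1 := fun n => bioE_norm_le u n
  -- the map ψ and the set K
  have hclip_norm : ∀ (t : ℕ → ℝ) (n : ℕ), ‖clipR (ε n) (t n) • e n‖ ≤ (1/2:ℝ) ^ n := by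
    intro t n
    rw [norm_smul, Real.norm_eq_abs, abs_of_nonneg (clipR_nonneg _ _)]
    calc clipR (ε n) (t n) * ‖e n‖ ≤ ε n * 1 :=
        mul_le_mul (clipR_le (hε_pos n).le _) (he_norm n) (norm_nonneg _) (hε_pos n).le
    _ = ε n := mul_one _
    _ ≤ (1/2:ℝ) ^ n := hε_le n
  have hsummable : ∀ t : ℕ → ℝ, Summable fun n => clipR (ε n) (t n) • e n := fun t =>
    Summable.of_norm_bounded summable_geometric_two (hclip_norm t)
  set ψ : (ℕ → ℝ) → X := fun t => ∑' n, clipR (ε n) (t n) • e n with hψ_def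
  set S : Set (ℕ → ℝ) := Set.univ.pi fun n => Icc (0:ℝ) (ε n) with hS_def
  have hmemS : ∀ t : ℕ → ℝ, t ∈ S ↔ ∀ n, 0 ≤ t n ∧ t n ≤ ε n := by
    intro t
    constructor
    · intro h n; exact h n (mem_univ n)
    · intro h n _; exact ⟨(h n).1, (h n).2⟩
  have hsummable' : ∀ t ∈ S, Summable fun n => t n • e n := by
    intro t ht
    have : (fun n => t n • e n) = fun n => clipR (ε n) (t n) • e n := by
      funext n
      rw [clipR_eq ((hmemS t).mp ht n).1 ((hmemS t).mp ht n).2]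
    rw [this]
    exact hsummable t
  have hψS : ∀ t ∈ S, ψ t = ∑' n, t n • e n := by
    intro t ht
    refine tsum_congr fun n => ?_
    rw [clipR_eq ((hmemS t).mp ht n).1 ((hmemS t).mp ht n).2]
  set K : Set X := ψ '' S with hK_def
  have h0S : (0 : ℕ → ℝ) ∈ S := by
    rw [hmemS]; intro n; exact ⟨le_refl _, (hε_pos n).le⟩
  refine ⟨K, ⟨ψ 0, mem_image_of_mem _ h0S⟩, ?_, ?_, ?_, ?_⟩
  · -- compact
    refine (isCompact_univ_pi fun n => isCompact_Icc).image ?_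
    exact continuous_tsum
      (fun n => ((continuous_clipR (ε n)).comp (continuous_apply n)).smul continuous_const)
      summable_geometric_two (fun n t => hclip_norm t n)
  · -- convex
    rintro x ⟨t, ht, rfl⟩ y ⟨s, hs, rfl⟩ p q hp hq hpq
    refine ⟨fun n => p * t n + q * s n, ?_, ?_⟩
    · rw [hmemS]
      intro n
      obtain ⟨ht0, ht1⟩ := (hmemS t).mp ht n
      obtain ⟨hs0, hs1⟩ := (hmemS s).mp hs n
      constructor
      · exact add_nonneg (mul_nonneg hp ht0) (mul_nonneg hq hs0)
      · calc p * t n + q * s n ≤ p * ε n + q * ε n := by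
              exact add_le_add (mul_le_mul_of_nonneg_left ht1 hp)
                (mul_le_mul_of_nonneg_left hs1 hq)
        _ = ε n := by rw [← add_mul, hpq, one_mul]
    · have hc : (fun n => p * t n + q * s n) ∈ S := by
        rw [hmemS]
        intro n
        obtain ⟨ht0, ht1⟩ := (hmemS t).mp ht n
        obtain ⟨hs0, hs1⟩ := (hmemS s).mp hs n
        refine ⟨add_nonneg (mul_nonneg hp ht0) (mul_nonneg hq hs0), ?_⟩
        calc p * t n + q * s n ≤ p * ε n + q * ε n :=
              add_le_add (mul_le_mul_of_nonneg_left ht1 hp)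
                (mul_le_mul_of_nonneg_left hs1 hq)
        _ = ε n := by rw [← add_mul, hpq, one_mul]
      rw [hψS _ hc, hψS t ht, hψS s hs]
      have : (fun n => (p * t n + q * s n) • e n)
          = fun n => p • (t n • e n) + q • (s n • e n) := by
        funext n
        rw [add_smul, mul_smul, mul_smul]
      rw [this, Summable.tsum_add ((hsummable' t ht).const_smul p) ((hsummable' s hs).const_smul q),
        Summable.tsum_const_smul p (hsummable' t ht), Summable.tsum_const_smul q (hsummable' s hs)]
  · -- generating
    have hεe_mem : ∀ n, ε n • e n ∈ K := by
      intro n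
      refine ⟨fun k => if k = n then ε n else 0, ?_, ?_⟩
      · rw [hmemS]
        intro k
        by_cases hk : k = n
        · simp [hk, (hε_pos n).le]
        · simp [hk, (hε_pos k).le]
      · have : (fun k => clipR (ε k) (if k = n then ε n else 0) • e k)
            = fun k => if k = n then ε n • e n else 0 := by
          funext k
          by_cases hk : k = n
          · subst hk
            rw [if_pos rfl, if_pos rfl, clipR_eq (hε_pos k).le (le_refl _)]
          · rw [if_neg hk, if_neg hk, clipR_eq (le_refl _) (hε_pos k).le, zero_smul]
        rw [hψ_def]
        simp only []
        rw [this, tsum_ite_eq n (fun _ => ε n • e n)]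
    have he_span : ∀ n, e n ∈ span ℝ K := by
      intro n
      have h1 : ε n • e n ∈ span ℝ K := subset_span (hεe_mem n)
      have h2 : e n = (ε n)⁻¹ • (ε n • e n) := by
        rw [smul_smul, inv_mul_cancel₀ (hε_pos n).ne', one_smul]
      rw [h2]
      exact Submodule.smul_mem _ _ h1
    rw [← Submodule.dense_iff_topologicalClosure_eq_top]
    have hsub : Set.range u ⊆ (span ℝ K : Set X) := by
      rintro _ ⟨n, rfl⟩
      have : span ℝ (Set.range e) ≤ span ℝ K :=
        span_le.mpr (range_subset_iff.mpr he_span)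
      exact this (bio_u_mem u n)
    exact hu.mono hsub
  · -- the retraction
    refine ⟨2, fun x => ψ (fun n => f n x), by norm_num, ?_, ?_, ?_⟩
    · -- Hölder estimate
      intro x y
      have hxy : (0:ℝ) ≤ ‖x - y‖ := norm_nonneg _
      have hsub : ψ (fun n => f n x) - ψ (fun n => f n y)
          = ∑' n, (clipR (ε n) (f n x) • e n - clipR (ε n) (f n y) • e n) :=
        (Summable.tsum_sub (hsummable _) (hsummable _)).symm
      rw [hsub]
      have hbound : ∀ n : ℕ, ‖clipR (ε n) (f n x) • e n - clipR (ε n) (f n y) • e n‖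
          ≤ (1/2:ℝ) ^ n * ‖x - y‖ ^ α := by
        intro n
        rw [← sub_smul, norm_smul, Real.norm_eq_abs]
        calc |clipR (ε n) (f n x) - clipR (ε n) (f n y)| * ‖e n‖
            ≤ |clipR (ε n) (f n x) - clipR (ε n) (f n y)| * 1 :=
              mul_le_mul_of_nonneg_left (he_norm n) (abs_nonneg _)
        _ = |clipR (ε n) (f n x) - clipR (ε n) (f n y)| := mul_one _
        _ ≤ min (ε n) (m n * ‖x - y‖) := by
              refine le_min (clipR_diff_le (hε_pos n).le _ _) ?_
              refine (clipR_lip _ _ _).trans ?_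
              have : |f n x - f n y| = ‖f n (x - y)‖ := by
                rw [map_sub]; rfl
              rw [this]
              exact ((f n).le_opNorm _).trans
                (mul_le_mul_of_nonneg_right (hfm n) hxy)
        _ ≤ ε n ^ (1-α) * (m n * ‖x - y‖) ^ α :=
              min_le_rpow_mul (hε_pos n).le (mul_nonneg (hm_pos n).le hxy) hα₀.le hα₁.le
        _ = ε n ^ (1-α) * ((m n) ^ α * ‖x - y‖ ^ α) := by
              rw [Real.mul_rpow (hm_pos n).le hxy]
        _ = (ε n ^ (1-α) * (m n) ^ α) * ‖x - y‖ ^ α := by ring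
        _ = (1/2:ℝ) ^ n * ‖x - y‖ ^ α := by rw [hkey n]
      have hgsum : HasSum (fun n : ℕ => (1/2:ℝ) ^ n * ‖x - y‖ ^ α) (2 * ‖x - y‖ ^ α) := by
        have := (hasSum_geometric_two).mul_right (‖x - y‖ ^ α)
        simpa using this
      exact tsum_of_norm_bounded hgsum hbound
    · -- range ⊆ K
      rintro _ ⟨x, rfl⟩
      refine ⟨fun n => clipR (ε n) (f n x), ?_, ?_⟩
      · rw [hmemS]
        intro n
        exact ⟨clipR_nonneg _ _, clipR_le (hε_pos n).le _⟩
      · refine tsum_congr fun n => ?_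
        rw [clipR_eq (clipR_nonneg _ _) (clipR_le (hε_pos n).le _)]
    · -- fixes K
      rintro _ ⟨t, ht, rfl⟩
      refine tsum_congr fun n => ?_
      by_cases hz : e n = 0
      · rw [hz, smul_zero, smul_zero]
      · have hfn : f n (ψ t) = t n := by
          rw [hψS t ht, ContinuousLinearMap.map_tsum _ (hsummable' t ht)]
          have : (fun k => f n (t k • e k)) = fun k => if k = n then t n else 0 := by
            funext k
            rw [map_smul, smul_eq_mul]
            by_cases hk : k = n
            · rw [hk, if_pos rfl, bioF_self u hz, mul_one]
            · rw [if_neg hk, bioF_ne u k n (fun h => hk h.symm), mul_zero]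
          rw [this, tsum_ite_eq n (fun _ => t n)]
        show clipR (ε n) (f n (ψ t)) • e n = _
        rw [hfn, clipR_eq ((hmemS t).mp ht n).1 ((hmemS t).mp ht n).2]
end

section
/- Let X be a real Banach space and Y a closed linear subspace of X which is a Lipschitz retract of X (there are a constant K and a K-Lipschitz map r : X → X with range contained in Y and r(y) = y for all y ∈ Y). Then there exists a bounded linear extension operator G : Y* → X* between the continuous dual spaces: G is a continuous linear map such that (G g)(y) = g(y) for every continuous linear functional g on Y and every y ∈ Y. -/
open Finset

namespace AmenAux

variable {G : Type*} [AddCommGroup G]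

def Bdd (G : Type*) [AddCommGroup G] : Submodule ℝ (G → ℝ) where
  carrier := {φ | ∃ C, ∀ x, |φ x| ≤ C}
  add_mem' := by
    rintro f g ⟨C, hC⟩ ⟨D, hD⟩
    exact ⟨C + D, fun x => (abs_add_le _ _).trans (add_le_add (hC x) (hD x))⟩
  zero_mem' := ⟨0, by simp⟩
  smul_mem' := by
    rintro c f ⟨C, hC⟩
    exact ⟨|c| * C, fun x => by
      rw [Pi.smul_apply, smul_eq_mul, abs_mul]
      exact mul_le_mul_of_nonneg_left (hC x) (abs_nonneg c)⟩

variable [Nonempty G]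

/-- averaged sup -/
noncomputable def A (φ : G → ℝ) (n : ℕ) (s : Fin n → G) : ℝ :=
  ⨆ u : G, (∑ i, φ (u + s i)) / n

def pset (φ : G → ℝ) : Set ℝ :=
  {x | ∃ (n : ℕ) (_ : 0 < n) (s : Fin n → G), x = A φ n s}

noncomputable def p (φ : G → ℝ) : ℝ := sInf (pset φ)

lemma C_nonneg {φ : G → ℝ} {C : ℝ} (hC : ∀ x, |φ x| ≤ C) : 0 ≤ C :=
  le_trans (abs_nonneg _) (hC Classical.ofNonempty)

lemma avg_le {φ : G → ℝ} {C : ℝ} (hC : ∀ x, |φ x| ≤ C) {n : ℕ} (hn : 0 < n)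
    (s : Fin n → G) (u : G) : |(∑ i, φ (u + s i)) / n| ≤ C := by
  have hn' : (0:ℝ) < n := by exact_mod_cast hn
  rw [abs_div, abs_of_pos hn', div_le_iff₀ hn']
  calc |∑ i, φ (u + s i)| ≤ ∑ i, |φ (u + s i)| := Finset.abs_sum_le_sum_abs _ _
    _ ≤ ∑ _i : Fin n, C := Finset.sum_le_sum fun i _ => hC _
    _ = C * n := by simp [mul_comm]

lemma bddAbove_avg {φ : G → ℝ} {C : ℝ} (hC : ∀ x, |φ x| ≤ C) {n : ℕ} (hn : 0 < n)
    (s : Fin n → G) : BddAbove (Set.range fun u : G => (∑ i, φ (u + s i)) / n) := by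
  refine ⟨C, ?_⟩
  rintro x ⟨u, rfl⟩
  exact (abs_le.1 (avg_le hC hn s u)).2

lemma A_le {φ : G → ℝ} {C : ℝ} (hC : ∀ x, |φ x| ≤ C) {n : ℕ} (hn : 0 < n)
    (s : Fin n → G) : A φ n s ≤ C :=
  ciSup_le fun u => (abs_le.1 (avg_le hC hn s u)).2

lemma neg_le_A {φ : G → ℝ} {C : ℝ} (hC : ∀ x, |φ x| ≤ C) {n : ℕ} (hn : 0 < n)
    (s : Fin n → G) : -C ≤ A φ n s :=
  le_trans (abs_le.1 (avg_le hC hn s Classical.ofNonempty)).1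
    (le_ciSup (bddAbove_avg hC hn s) _)

lemma pset_nonempty (φ : G → ℝ) : (pset φ).Nonempty :=
  ⟨A φ 1 (fun _ => 0), 1, one_pos, fun _ => 0, rfl⟩

lemma neg_le_p {φ : G → ℝ} {C : ℝ} (hC : ∀ x, |φ x| ≤ C) : -C ≤ p φ := by
  refine le_csInf (pset_nonempty φ) ?_
  rintro x ⟨n, hn, s, rfl⟩
  exact neg_le_A hC hn s

lemma bddBelow_pset {φ : G → ℝ} (hφ : φ ∈ Bdd G) : BddBelow (pset φ) := by
  obtain ⟨C, hC⟩ := hφ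
  refine ⟨-C, ?_⟩
  rintro x ⟨n, hn, s, rfl⟩
  exact neg_le_A hC hn s

lemma p_le_A {φ : G → ℝ} (hφ : φ ∈ Bdd G) {n : ℕ} (hn : 0 < n) (s : Fin n → G) :
    p φ ≤ A φ n s :=
  csInf_le (bddBelow_pset hφ) ⟨n, hn, s, rfl⟩

lemma p_le {φ : G → ℝ} {C : ℝ} (hC : ∀ x, |φ x| ≤ C) : p φ ≤ C :=
  (p_le_A ⟨C, hC⟩ one_pos fun _ => 0).trans (A_le hC one_pos _)


set_option linter.unusedSectionVars false

/-- combined family -/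
def comb {n m : ℕ} (s : Fin n → G) (t : Fin m → G) : Fin (n * m) → G :=
  fun k => s (finProdFinEquiv.symm k).1 + t (finProdFinEquiv.symm k).2

lemma sum_comb (φ : G → ℝ) {n m : ℕ} (s : Fin n → G) (t : Fin m → G) (u : G) :
    ∑ k, φ (u + comb s t k) = ∑ i : Fin n, ∑ j : Fin m, φ (u + (s i + t j)) := by
  rw [← Equiv.sum_comp finProdFinEquiv (fun k => φ (u + comb s t k)), Fintype.sum_prod_type]
  simp [comb]

lemma A_comb_le_left {φ : G → ℝ} (hφ : φ ∈ Bdd G) {n m : ℕ} (hn : 0 < n) (hm : 0 < m)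
    (s : Fin n → G) (t : Fin m → G) : A φ (n * m) (comb s t) ≤ A φ n s := by
  obtain ⟨C, hC⟩ := hφ
  refine ciSup_le fun u => ?_
  have hn' : (0:ℝ) < n := by exact_mod_cast hn
  have hm' : (0:ℝ) < m := by exact_mod_cast hm
  rw [sum_comb, div_le_iff₀ (by positivity)]
  push_cast
  calc ∑ i : Fin n, ∑ j : Fin m, φ (u + (s i + t j))
      = ∑ j : Fin m, ∑ i : Fin n, φ ((u + t j) + s i) := by
        rw [Finset.sum_comm]
        refine Finset.sum_congr rfl fun j _ => Finset.sum_congr rfl fun i _ => ?_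
        congr 1; abel
    _ ≤ ∑ _j : Fin m, A φ n s * n := by
        refine Finset.sum_le_sum fun j _ => ?_
        have h1 : (∑ i, φ ((u + t j) + s i)) / n ≤ A φ n s :=
          le_ciSup (bddAbove_avg hC hn s) (u + t j)
        calc ∑ i, φ ((u + t j) + s i) = ((∑ i, φ ((u + t j) + s i)) / n) * n := by
              field_simp
          _ ≤ A φ n s * n := by exact mul_le_mul_of_nonneg_right h1 hn'.le
    _ = A φ n s * (↑n * ↑m) := by simp [Finset.sum_const]; ring

lemma A_comb_le_right {φ : G → ℝ} (hφ : φ ∈ Bdd G) {n m : ℕ} (hn : 0 < n) (hm : 0 < m)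
    (s : Fin n → G) (t : Fin m → G) : A φ (n * m) (comb s t) ≤ A φ m t := by
  obtain ⟨C, hC⟩ := hφ
  refine ciSup_le fun u => ?_
  have hn' : (0:ℝ) < n := by exact_mod_cast hn
  have hm' : (0:ℝ) < m := by exact_mod_cast hm
  rw [sum_comb, div_le_iff₀ (by positivity)]
  push_cast
  calc ∑ i : Fin n, ∑ j : Fin m, φ (u + (s i + t j))
      = ∑ i : Fin n, ∑ j : Fin m, φ ((u + s i) + t j) := by
        refine Finset.sum_congr rfl fun i _ => Finset.sum_congr rfl fun j _ => ?_
        congr 1; abel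
    _ ≤ ∑ _i : Fin n, A φ m t * m := by
        refine Finset.sum_le_sum fun i _ => ?_
        have h1 : (∑ j, φ ((u + s i) + t j)) / m ≤ A φ m t :=
          le_ciSup (bddAbove_avg hC hm t) (u + s i)
        calc ∑ j, φ ((u + s i) + t j) = ((∑ j, φ ((u + s i) + t j)) / m) * m := by
              field_simp
          _ ≤ A φ m t * m := by exact mul_le_mul_of_nonneg_right h1 hm'.le
    _ = A φ m t * (↑n * ↑m) := by simp [Finset.sum_const]; ring

lemma A_add_le {φ ψ : G → ℝ} (hφ : φ ∈ Bdd G) (hψ : ψ ∈ Bdd G) {n : ℕ} (hn : 0 < n)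
    (s : Fin n → G) : A (φ + ψ) n s ≤ A φ n s + A ψ n s := by
  obtain ⟨C, hC⟩ := hφ
  obtain ⟨D, hD⟩ := hψ
  refine ciSup_le fun u => ?_
  have : (∑ i, (φ + ψ) (u + s i)) / n
      = (∑ i, φ (u + s i)) / n + (∑ i, ψ (u + s i)) / n := by
    rw [← add_div, ← Finset.sum_add_distrib]; rfl
  rw [this]
  exact add_le_add (le_ciSup (bddAbove_avg hC hn s) u) (le_ciSup (bddAbove_avg hD hn s) u)

lemma p_add_le {φ ψ : G → ℝ} (hφ : φ ∈ Bdd G) (hψ : ψ ∈ Bdd G) :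
    p (φ + ψ) ≤ p φ + p ψ := by
  have key : ∀ {n : ℕ}, 0 < n → ∀ (s : Fin n → G) {m : ℕ}, 0 < m → ∀ (t : Fin m → G),
      p (φ + ψ) ≤ A φ n s + A ψ m t := by
    intro n hn s m hm t
    calc p (φ + ψ) ≤ A (φ + ψ) (n * m) (comb s t) :=
          p_le_A (Submodule.add_mem _ hφ hψ) (Nat.mul_pos hn hm) _
      _ ≤ A φ (n * m) (comb s t) + A ψ (n * m) (comb s t) :=
          A_add_le hφ hψ (Nat.mul_pos hn hm) _
      _ ≤ A φ n s + A ψ m t :=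
          add_le_add (A_comb_le_left hφ hn hm s t) (A_comb_le_right hψ hn hm s t)
  have h1 : p (φ + ψ) - p φ ≤ p ψ := by
    refine le_csInf (pset_nonempty ψ) ?_
    rintro b ⟨m, hm, t, rfl⟩
    rw [sub_le_iff_le_add]
    have h2 : p (φ + ψ) - A ψ m t ≤ p φ := by
      refine le_csInf (pset_nonempty φ) ?_
      rintro a ⟨n, hn, s, rfl⟩
      rw [sub_le_iff_le_add]
      exact (key hn s hm t).trans (by linarith)
    linarith
  linarith

lemma A_smul {φ : G → ℝ} {c : ℝ} (hc : 0 ≤ c) {n : ℕ} (s : Fin n → G) :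
    A (c • φ) n s = c * A φ n s := by
  rw [A, A, Real.mul_iSup_of_nonneg hc]
  congr 1; ext u
  rw [← mul_div_assoc, Finset.mul_sum]
  rfl

lemma p_smul_le {φ : G → ℝ} (hφ : φ ∈ Bdd G) {c : ℝ} (hc : 0 < c) :
    p (c • φ) ≤ c * p φ := by
  have h2 : p (c • φ) / c ≤ p φ := by
    refine le_csInf (pset_nonempty φ) ?_
    rintro a ⟨n, hn, s, rfl⟩
    rw [div_le_iff₀ hc, mul_comm, ← A_smul hc.le]
    exact p_le_A (Submodule.smul_mem _ c hφ) hn s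
  calc p (c • φ) = c * (p (c • φ) / c) := by field_simp
    _ ≤ c * p φ := mul_le_mul_of_nonneg_left h2 hc.le

lemma p_smul {φ : G → ℝ} (hφ : φ ∈ Bdd G) {c : ℝ} (hc : 0 < c) :
    p (c • φ) = c * p φ := by
  refine le_antisymm (p_smul_le hφ hc) ?_
  have h := p_smul_le (Submodule.smul_mem _ c hφ) (inv_pos.2 hc)
  rw [inv_smul_smul₀ hc.ne'] at h
  calc c * p φ ≤ c * (c⁻¹ * p (c • φ)) := by
        exact mul_le_mul_of_nonneg_left h hc.le
    _ = p (c • φ) := by field_simp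

lemma p_shift_le {φ : G → ℝ} (hφ : φ ∈ Bdd G) (a : G) :
    p (fun x => φ (x + a) - φ x) ≤ 0 := by
  obtain ⟨C, hC⟩ := hφ
  set δ : G → ℝ := fun x => φ (x + a) - φ x with hδ
  have hδmem : δ ∈ Bdd G := ⟨2 * C, fun x => by
    have := hC (x + a); have := hC x
    rw [hδ]; dsimp only
    calc |φ (x + a) - φ x| ≤ |φ (x + a)| + |φ x| := abs_sub _ _
      _ ≤ 2 * C := by linarith⟩
  have key : ∀ n : ℕ, 0 < n → p δ ≤ 2 * C / n := by
    intro n hn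
    have hn' : (0:ℝ) < n := by exact_mod_cast hn
    refine (p_le_A hδmem hn (fun i : Fin n => (i : ℕ) • a)).trans ?_
    refine ciSup_le fun u => ?_
    have hsum : (∑ i : Fin n, δ (u + (i : ℕ) • a)) = φ (u + n • a) - φ (u + 0 • a) := by
      rw [Fin.sum_univ_eq_sum_range (fun i => δ (u + i • a))]
      rw [← Finset.sum_range_sub (fun i => φ (u + i • a))]
      congr 1; ext i
      rw [hδ]; dsimp only
      congr 2
      rw [succ_nsmul, add_assoc]
    rw [hsum]
    have h1 : φ (u + n • a) - φ (u + 0 • a) ≤ 2 * C := by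
      have := hC (u + n • a); have := hC (u + 0 • a)
      have h2 := abs_le.1 (hC (u + n • a))
      have h3 := abs_le.1 (hC (u + 0 • a))
      linarith
    exact div_le_div_of_nonneg_right h1 hn'.le
  by_contra h
  push_neg at h
  have hC0 : 0 ≤ C := C_nonneg hC
  obtain ⟨n, hn⟩ := exists_nat_gt (2 * C / p δ)
  have hn0 : 0 < n := by
    by_contra h0
    push_neg at h0
    interval_cases n
    simp at hn
    nlinarith [div_nonneg (by linarith : (0:ℝ) ≤ 2*C) h.le]
  have := key n hn0
  have hn' : (0:ℝ) < n := by exact_mod_cast hn0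
  rw [div_lt_iff₀ (by positivity)] at hn
  rw [le_div_iff₀ hn'] at this
  nlinarith

/-- constant function as element of Bdd -/
def constB (c : ℝ) : ↥(Bdd G) := ⟨fun _ => c, ⟨|c|, fun _ => le_refl _⟩⟩

/-- shift as operation on Bdd -/
def shiftB (a : G) (φ : ↥(Bdd G)) : ↥(Bdd G) :=
  ⟨fun x => (φ : G → ℝ) (x + a), by
    obtain ⟨C, hC⟩ := φ.2
    exact ⟨C, fun x => hC _⟩⟩

theorem exists_mean : ∃ m : ↥(Bdd G) →ₗ[ℝ] ℝ,
    ∀ φ : ↥(Bdd G), m φ ≤ p (φ : G → ℝ) := by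
  have hf : ∀ x : ((⊥ : Submodule ℝ ↥(Bdd G)) : Type _),
      (⟨⊥, 0⟩ : ↥(Bdd G) →ₗ.[ℝ] ℝ) x ≤ p ((x : ↥(Bdd G)) : G → ℝ) := by
    intro x
    have hx : (x : ↥(Bdd G)) = 0 := by
      have := x.2
      rwa [Submodule.mem_bot] at this
    rw [hx]
    have : -(0:ℝ) ≤ p (((0 : ↥(Bdd G)) : G → ℝ)) :=
      neg_le_p (C := 0) (fun x => by simp)
    simpa using this
  obtain ⟨g, -, hg⟩ := exists_extension_of_le_sublinear
    (⟨⊥, 0⟩ : ↥(Bdd G) →ₗ.[ℝ] ℝ) (fun φ : ↥(Bdd G) => p (φ : G → ℝ))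
    (fun c hc φ => by
      have h : ((c • φ : ↥(Bdd G)) : G → ℝ) = c • (φ : G → ℝ) := rfl
      rw [h, p_smul φ.2 hc])
    (fun φ ψ => by
      have h : ((φ + ψ : ↥(Bdd G)) : G → ℝ) = (φ : G → ℝ) + (ψ : G → ℝ) := rfl
      rw [h]
      exact p_add_le φ.2 ψ.2)
    hf
  exact ⟨g, hg⟩

lemma A_const (c : ℝ) {n : ℕ} (hn : 0 < n) (s : Fin n → G) :
    A (fun _ : G => c) n s = c := by
  have hn' : (0:ℝ) < n := by exact_mod_cast hn
  have h : ∀ u : G, (∑ _i : Fin n, c) / (n:ℝ) = c := fun u => by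
    rw [Finset.sum_const, Finset.card_univ, Fintype.card_fin, nsmul_eq_mul]
    field_simp
  refine le_antisymm (ciSup_le fun u => le_of_eq (h u)) ?_
  exact (h Classical.ofNonempty).ge.trans
    (le_ciSup (bddAbove_avg (fun _ => le_refl |c|) hn s) Classical.ofNonempty)

variable {m : ↥(Bdd G) →ₗ[ℝ] ℝ} (hm : ∀ φ : ↥(Bdd G), m φ ≤ p (φ : G → ℝ))

include hm

lemma mean_bound {φ : ↥(Bdd G)} {C : ℝ} (hC : ∀ x, |(φ : G → ℝ) x| ≤ C) :
    |m φ| ≤ C := by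
  rw [abs_le]
  constructor
  · have h1 : m (-φ) ≤ p ((-φ : ↥(Bdd G)) : G → ℝ) := hm _
    have h2 : p ((-φ : ↥(Bdd G)) : G → ℝ) ≤ C := p_le (fun x => by
      have h : ((-φ : ↥(Bdd G)) : G → ℝ) x = -(φ : G → ℝ) x := rfl
      rw [h, abs_neg]; exact hC x)
    rw [map_neg] at h1
    linarith
  · exact (hm φ).trans (p_le hC)

lemma mean_const (c : ℝ) : m (constB c) = c := by
  have h1 : m (constB c) ≤ c := by
    refine (hm (constB c)).trans ?_
    have h : ((constB c : ↥(Bdd G)) : G → ℝ) = fun _ : G => c := rfl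
    rw [h]
    have := p_le_A (φ := fun _ : G => c) ⟨|c|, fun _ => le_refl _⟩ one_pos (fun _ => 0)
    rwa [A_const c one_pos] at this
  have h2 : m (-(constB c)) ≤ -c := by
    have hcoe : ((-(constB c) : ↥(Bdd G)) : G → ℝ) = fun _ : G => -c := rfl
    refine (hm _).trans ?_
    rw [hcoe]
    have := p_le_A (φ := fun _ : G => -c) ⟨|c|, fun _ => by simp⟩ one_pos (fun _ => 0)
    rwa [A_const (-c) one_pos] at this
  rw [map_neg] at h2
  linarith

lemma mean_shift (a : G) (φ : ↥(Bdd G)) : m (shiftB a φ) = m φ := by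
  have h1 : m (shiftB a φ - φ) ≤ 0 := by
    refine (hm _).trans ?_
    have hcoe : ((shiftB a φ - φ : ↥(Bdd G)) : G → ℝ)
        = fun x => (φ : G → ℝ) (x + a) - (φ : G → ℝ) x := rfl
    rw [hcoe]
    exact p_shift_le φ.2 a
  have h2 : m (φ - shiftB a φ) ≤ 0 := by
    refine (hm _).trans ?_
    have hcoe : ((φ - shiftB a φ : ↥(Bdd G)) : G → ℝ)
        = fun x => (-(φ : G → ℝ)) (x + a) - (-(φ : G → ℝ)) x := by
      funext x
      show (φ : G → ℝ) x - (φ : G → ℝ) (x + a) = _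
      simp only [Pi.neg_apply]
      ring
    rw [hcoe]
    exact p_shift_le (Submodule.neg_mem _ φ.2) a
  rw [map_sub] at h1 h2
  linarith

end AmenAux

namespace LindAux

open AmenAux

variable {X : Type*} [NormedAddCommGroup X] [NormedSpace ℝ X]
variable (Y : Submodule ℝ X) (r : X → X)

instance : Nonempty ↥Y := ⟨0⟩

/-- the element `r (v + y) - y` of `Y`. -/
def el (hr : ∀ v : X, r v ∈ Y) (v : X) (y : ↥Y) : ↥Y :=
  ⟨r (v + ↑y) - ↑y, sub_mem (hr _) y.2⟩

variable {K : NNReal} (hr : ∀ v : X, r v ∈ Y) (hlip : LipschitzWith K r)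
  (hfix : ∀ x ∈ Y, r x = x)

include hr hlip hfix

lemma el_norm_sub (v w : X) (y : ↥Y) :
    ‖el Y r hr v y - el Y r hr w y‖ ≤ K * ‖v - w‖ := by
  have h1 : ((el Y r hr v y - el Y r hr w y : ↥Y) : X) = r (v + ↑y) - r (w + ↑y) := by
    simp only [el, AddSubgroupClass.coe_sub]
    abel
  have h2 := hlip.dist_le_mul (v + ↑y) (w + ↑y)
  rw [dist_eq_norm, dist_eq_norm] at h2
  have h3 : (v + ↑y) - (w + ↑y) = v - w := by abel
  rw [h3] at h2
  calc ‖el Y r hr v y - el Y r hr w y‖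
      = ‖((el Y r hr v y - el Y r hr w y : ↥Y) : X)‖ := rfl
    _ = ‖r (v + ↑y) - r (w + ↑y)‖ := by rw [h1]
    _ ≤ K * ‖v - w‖ := h2

lemma el_zero (y : ↥Y) : el Y r hr 0 y = 0 := by
  apply Subtype.ext
  show r (0 + ↑y) - ↑y = ((0 : ↥Y) : X)
  rw [zero_add, hfix ↑y y.2, sub_self]
  rfl

lemma phi_sub_bound (g : ↥Y →L[ℝ] ℝ) (v w : X) (y : ↥Y) :
    |g (el Y r hr v y) - g (el Y r hr w y)| ≤ ‖g‖ * (K * ‖v - w‖) := by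
  rw [← map_sub]
  refine (g.le_opNorm _).trans ?_
  exact mul_le_mul_of_nonneg_left (el_norm_sub Y r hr hlip hfix v w y) (norm_nonneg g)

lemma phi_mem (g : ↥Y →L[ℝ] ℝ) (v : X) :
    (fun y => g (el Y r hr v y)) ∈ Bdd ↥Y := by
  refine ⟨‖g‖ * (K * ‖v‖), fun y => ?_⟩
  have h := phi_sub_bound Y r hr hlip hfix g v 0 y
  rw [el_zero Y r hr hlip hfix y, map_zero, sub_zero, sub_zero] at h
  exact h

variable (mY : ↥(Bdd ↥Y) →ₗ[ℝ] ℝ)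

/-- first stage functional -/
noncomputable def Tf (g : ↥Y →L[ℝ] ℝ) (v : X) : ℝ :=
  mY ⟨fun y => g (el Y r hr v y), phi_mem Y r hr hlip hfix g v⟩

lemma T_shift (hmY : ∀ φ : ↥(Bdd ↥Y), mY φ ≤ p (φ : ↥Y → ℝ))
    (g : ↥Y →L[ℝ] ℝ) (v : X) (y₀ : ↥Y) :
    Tf Y r hr hlip hfix mY g (v + ↑y₀) = Tf Y r hr hlip hfix mY g v + g y₀ := by
  have key : (⟨fun y => g (el Y r hr (v + ↑y₀) y),
        phi_mem Y r hr hlip hfix g (v + ↑y₀)⟩ : ↥(Bdd ↥Y))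
      = shiftB y₀ ⟨fun y => g (el Y r hr v y), phi_mem Y r hr hlip hfix g v⟩
        + constB (g y₀) := by
    apply Subtype.ext
    funext y
    show g (el Y r hr (v + ↑y₀) y) = g (el Y r hr v (y + y₀)) + g y₀
    have hel : el Y r hr v (y + y₀) = el Y r hr (v + ↑y₀) y - y₀ := by
      apply Subtype.ext
      show r (v + ↑(y + y₀)) - ↑(y + y₀) = (r (v + ↑y₀ + ↑y) - ↑y) - ↑y₀
      have harg : v + (↑(y + y₀) : X) = v + ↑y₀ + ↑y := by
        push_cast
        abel
      rw [harg]
      push_cast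
      abel
    rw [hel, map_sub]
    ring
  show mY _ = mY _ + g y₀
  rw [key, map_add, mean_shift hmY, mean_const hmY]

lemma T_sub_bound (hmY : ∀ φ : ↥(Bdd ↥Y), mY φ ≤ p (φ : ↥Y → ℝ))
    (g : ↥Y →L[ℝ] ℝ) (v w : X) :
    |Tf Y r hr hlip hfix mY g v - Tf Y r hr hlip hfix mY g w|
      ≤ ‖g‖ * (K * ‖v - w‖) := by
  rw [Tf, Tf, ← map_sub]
  refine mean_bound hmY fun y => ?_
  show |g (el Y r hr v y) - g (el Y r hr w y)| ≤ _
  exact phi_sub_bound Y r hr hlip hfix g v w y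

lemma T_add (g g' : ↥Y →L[ℝ] ℝ) (v : X) :
    Tf Y r hr hlip hfix mY (g + g') v
      = Tf Y r hr hlip hfix mY g v + Tf Y r hr hlip hfix mY g' v := by
  have key : (⟨fun y => (g + g') (el Y r hr v y),
        phi_mem Y r hr hlip hfix (g + g') v⟩ : ↥(Bdd ↥Y))
      = ⟨fun y => g (el Y r hr v y), phi_mem Y r hr hlip hfix g v⟩
        + ⟨fun y => g' (el Y r hr v y), phi_mem Y r hr hlip hfix g' v⟩ :=
    Subtype.ext (funext fun y => by
      show (g + g') (el Y r hr v y) = _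
      rw [ContinuousLinearMap.add_apply]
      rfl)
  show mY _ = mY _ + mY _
  rw [key, map_add]

lemma T_smul (c : ℝ) (g : ↥Y →L[ℝ] ℝ) (v : X) :
    Tf Y r hr hlip hfix mY (c • g) v = c * Tf Y r hr hlip hfix mY g v := by
  have key : (⟨fun y => (c • g) (el Y r hr v y),
        phi_mem Y r hr hlip hfix (c • g) v⟩ : ↥(Bdd ↥Y))
      = c • ⟨fun y => g (el Y r hr v y), phi_mem Y r hr hlip hfix g v⟩ :=
    Subtype.ext (funext fun y => by
      show (c • g) (el Y r hr v y) = _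
      rw [ContinuousLinearMap.smul_apply]
      rfl)
  show mY _ = c * mY _
  rw [key, map_smul]
  rfl

variable (mX : ↥(Bdd X) →ₗ[ℝ] ℝ)
  (hmY : ∀ φ : ↥(Bdd ↥Y), mY φ ≤ p (φ : ↥Y → ℝ))

instance : Nonempty X := ⟨0⟩

include hmY

lemma psi_mem (g : ↥Y →L[ℝ] ℝ) (x : X) :
    (fun u => Tf Y r hr hlip hfix mY g (x + u) - Tf Y r hr hlip hfix mY g u)
      ∈ Bdd X := by
  refine ⟨‖g‖ * (K * ‖x‖), fun u => ?_⟩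
  have h := T_sub_bound Y r hr hlip hfix mY hmY g (x + u) u
  rwa [add_sub_cancel_right] at h

/-- second stage functional -/
noncomputable def Sf (g : ↥Y →L[ℝ] ℝ) (x : X) : ℝ :=
  mX ⟨fun u => Tf Y r hr hlip hfix mY g (x + u) - Tf Y r hr hlip hfix mY g u,
    psi_mem Y r hr hlip hfix mY hmY g x⟩

variable (hmX : ∀ φ : ↥(Bdd X), mX φ ≤ p (φ : X → ℝ))
include hmX

lemma S_add (g : ↥Y →L[ℝ] ℝ) (x₁ x₂ : X) :
    Sf Y r hr hlip hfix mY mX hmY g (x₁ + x₂)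
      = Sf Y r hr hlip hfix mY mX hmY g x₁ + Sf Y r hr hlip hfix mY mX hmY g x₂ := by
  set T := Tf Y r hr hlip hfix mY with hT
  have key : (⟨fun u => T g (x₁ + x₂ + u) - T g u,
        psi_mem Y r hr hlip hfix mY hmY g (x₁ + x₂)⟩ : ↥(Bdd X))
      = shiftB x₂ ⟨fun u => T g (x₁ + u) - T g u, psi_mem Y r hr hlip hfix mY hmY g x₁⟩
        + ⟨fun u => T g (x₂ + u) - T g u, psi_mem Y r hr hlip hfix mY hmY g x₂⟩ := by
    apply Subtype.ext
    funext u
    show T g (x₁ + x₂ + u) - T g u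
      = (T g (x₁ + (u + x₂)) - T g (u + x₂)) + (T g (x₂ + u) - T g u)
    have e1 : x₁ + (u + x₂) = x₁ + x₂ + u := by abel
    have e2 : u + x₂ = x₂ + u := by abel
    rw [e1, e2]
    ring
  show mX _ = mX _ + mX _
  rw [key, map_add, mean_shift hmX]

lemma S_apply_mem (g : ↥Y →L[ℝ] ℝ) (y₀ : ↥Y) :
    Sf Y r hr hlip hfix mY mX hmY g ↑y₀ = g y₀ := by
  set T := Tf Y r hr hlip hfix mY with hT
  have key : (⟨fun u => T g (↑y₀ + u) - T g u,
        psi_mem Y r hr hlip hfix mY hmY g ↑y₀⟩ : ↥(Bdd X)) = constB (g y₀) := by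
    apply Subtype.ext
    funext u
    show T g (↑y₀ + u) - T g u = g y₀
    rw [add_comm, hT, T_shift Y r hr hlip hfix mY hmY g u y₀]
    ring
  show mX _ = _
  rw [key, mean_const hmX]

lemma S_bound (g : ↥Y →L[ℝ] ℝ) (x : X) :
    |Sf Y r hr hlip hfix mY mX hmY g x| ≤ ‖g‖ * (K * ‖x‖) := by
  refine mean_bound hmX fun u => ?_
  show |Tf Y r hr hlip hfix mY g (x + u) - Tf Y r hr hlip hfix mY g u| ≤ _
  have h := T_sub_bound Y r hr hlip hfix mY hmY g (x + u) u
  rwa [add_sub_cancel_right] at h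

lemma S_addg (g g' : ↥Y →L[ℝ] ℝ) (x : X) :
    Sf Y r hr hlip hfix mY mX hmY (g + g') x
      = Sf Y r hr hlip hfix mY mX hmY g x + Sf Y r hr hlip hfix mY mX hmY g' x := by
  set T := Tf Y r hr hlip hfix mY with hT
  have key : (⟨fun u => T (g + g') (x + u) - T (g + g') u,
        psi_mem Y r hr hlip hfix mY hmY (g + g') x⟩ : ↥(Bdd X))
      = ⟨fun u => T g (x + u) - T g u, psi_mem Y r hr hlip hfix mY hmY g x⟩
        + ⟨fun u => T g' (x + u) - T g' u, psi_mem Y r hr hlip hfix mY hmY g' x⟩ := by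
    apply Subtype.ext
    funext u
    show T (g + g') (x + u) - T (g + g') u = (T g (x + u) - T g u) + (T g' (x + u) - T g' u)
    rw [hT, T_add Y r hr hlip hfix mY (g := g) (g' := g') (x + u),
      T_add Y r hr hlip hfix mY (g := g) (g' := g') u]
    ring
  show mX _ = mX _ + mX _
  rw [key, map_add]

lemma S_smulg (c : ℝ) (g : ↥Y →L[ℝ] ℝ) (x : X) :
    Sf Y r hr hlip hfix mY mX hmY (c • g) x = c * Sf Y r hr hlip hfix mY mX hmY g x := by
  set T := Tf Y r hr hlip hfix mY with hT
  have key : (⟨fun u => T (c • g) (x + u) - T (c • g) u,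
        psi_mem Y r hr hlip hfix mY hmY (c • g) x⟩ : ↥(Bdd X))
      = c • ⟨fun u => T g (x + u) - T g u, psi_mem Y r hr hlip hfix mY hmY g x⟩ := by
    apply Subtype.ext
    funext u
    show T (c • g) (x + u) - T (c • g) u = c • (T g (x + u) - T g u)
    rw [hT, T_smul Y r hr hlip hfix mY c g (x + u), T_smul Y r hr hlip hfix mY c g u,
      smul_eq_mul]
    ring
  show mX _ = c * mX _
  rw [key, map_smul]
  rfl

end LindAux

set_option synthInstance.maxHeartbeats 1000000 in
set_option maxHeartbeats 1600000 in
/-- If a closed linear subspace `Y` of a real Banach space `X` is a Lipschitz retract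
of `X`, then there is a bounded linear extension operator `G : Y* → X*`. -/
theorem exists_dual_extension_operator_of_lipschitz_retract
    {X : Type*} [NormedAddCommGroup X] [NormedSpace ℝ X] [CompleteSpace X]
    (Y : Submodule ℝ X) (hYc : IsClosed (Y : Set X))
    (hret : ∃ (K : NNReal) (r : X → X),
      LipschitzWith K r ∧ Set.range r ⊆ (Y : Set X) ∧ ∀ y ∈ Y, r y = y) :
    ∃ G : (Y →L[ℝ] ℝ) →L[ℝ] (X →L[ℝ] ℝ),
      ∀ (g : Y →L[ℝ] ℝ) (y : Y), G g (y : X) = g y := by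
  obtain ⟨K, r, hlip, hrange, hfix⟩ := hret
  have hr : ∀ v : X, r v ∈ Y := fun v => hrange ⟨v, rfl⟩
  obtain ⟨mY, hmY⟩ := AmenAux.exists_mean (G := ↥Y)
  obtain ⟨mX, hmX⟩ := AmenAux.exists_mean (G := X)
  set S := LindAux.Sf Y r hr hlip hfix mY mX hmY with hS
  have hScont : ∀ g : Y →L[ℝ] ℝ, Continuous (S g) := by
    intro g
    have hl : LipschitzWith (‖g‖₊ * K) (S g) := by
      apply LipschitzWith.of_dist_le_mul
      intro x y
      rw [Real.dist_eq, dist_eq_norm]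
      have hsub : S g x - S g y = S g (x - y) := by
        have h := LindAux.S_add Y r hr hlip hfix mY mX hmY hmX g (x - y) y
        rw [sub_add_cancel] at h
        linarith
      rw [hsub]
      have hb := LindAux.S_bound Y r hr hlip hfix mY mX hmY hmX g (x - y)
      calc |S g (x - y)| ≤ ‖g‖ * (K * ‖x - y‖) := hb
        _ = ((‖g‖₊ * K : NNReal) : ℝ) * ‖x - y‖ := by push_cast; ring
    exact hl.continuous
  let F : (Y →L[ℝ] ℝ) → (X →L[ℝ] ℝ) := fun g =>
    AddMonoidHom.toRealLinearMap
      (AddMonoidHom.mk' (S g) (LindAux.S_add Y r hr hlip hfix mY mX hmY hmX g))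
      (hScont g)
  have hF : ∀ g x, F g x = S g x := fun g x => rfl
  let L : (Y →L[ℝ] ℝ) →ₗ[ℝ] (X →L[ℝ] ℝ) :=
    { toFun := F
      map_add' := fun g g' => by
        ext x
        rw [ContinuousLinearMap.add_apply, hF, hF, hF]
        exact LindAux.S_addg Y r hr hlip hfix mY mX hmY hmX g g' x
      map_smul' := fun c g => by
        ext x
        rw [RingHom.id_apply, ContinuousLinearMap.coe_smul', Pi.smul_apply, hF, hF,
          smul_eq_mul]
        exact LindAux.S_smulg Y r hr hlip hfix mY mX hmY hmX c g x }
  have hbound : ∀ g : Y →L[ℝ] ℝ, ‖L g‖ ≤ ↑K * ‖g‖ := by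
    intro g
    refine ContinuousLinearMap.opNorm_le_bound _ (by positivity) fun x => ?_
    have happ : (L g) x = S g x := hF g x
    rw [show (L g) x = S g x from happ, Real.norm_eq_abs]
    calc |S g x| ≤ ‖g‖ * (K * ‖x‖) := LindAux.S_bound Y r hr hlip hfix mY mX hmY hmX g x
      _ = ↑K * ‖g‖ * ‖x‖ := by ring
  have hc : Continuous L :=
    AddMonoidHomClass.continuous_of_bound (𝓕 := (Y →L[ℝ] ℝ) →ₗ[ℝ] (X →L[ℝ] ℝ)) L (↑K) hbound
  refine ⟨⟨L, hc⟩, fun g y => ?_⟩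
  show F g ↑y = g y
  rw [hF]
  exact LindAux.S_apply_mem Y r hr hlip hfix mY mX hmY hmX g y
end

section
/- Let X be a real Banach space and Y a closed linear subspace of X such that (i) Y is a Lipschitz retract of X (there are a constant K and a K-Lipschitz map r : X → X with range contained in Y and r(y) = y for all y ∈ Y), and (ii) Y is complemented in its bidual, i.e., there is a continuous linear map P : Y** → Y with P(ĵ(y)) = y for all y ∈ Y, where ĵ : Y → Y** is the canonical embedding. Then Y is complemented in X: there exists a continuous linear map Q : X → X with range equal to Y and Q(y) = y for every y ∈ Y. -/
open Finset in
theorem mk_single {ι : Type*} (C : ι → ℝ) {K : Set (ι → ℝ)} (hne : K.Nonempty)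
    (hcomp : IsCompact K) (hconv : Convex ℝ K) (hbd : ∀ φ ∈ K, ∀ i, |φ i| ≤ C i)
    (T : Module.End ℝ (ι → ℝ)) (hTc : Continuous T) (hTK : ∀ φ ∈ K, T φ ∈ K) :
    ∃ φ ∈ K, T φ = φ := by
  set S : ℕ → Module.End ℝ (ι → ℝ) :=
    fun n => (((n : ℝ) + 1)⁻¹) • ∑ i ∈ range (n + 1), T ^ i with hS
  have hpowc : ∀ i : ℕ, Continuous (T ^ i : Module.End ℝ (ι → ℝ)) := by
    intro i
    induction i with
    | zero => rw [pow_zero]; exact continuous_id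
    | succ n ih =>
      have : (T ^ (n + 1) : Module.End ℝ (ι → ℝ)) = (T ^ n) * T := pow_succ T n
      rw [this]
      exact ih.comp hTc
  have hpowK : ∀ (i : ℕ) (φ), φ ∈ K → (T ^ i) φ ∈ K := by
    intro i
    induction i with
    | zero => intro φ hφ; simpa [pow_zero, Module.End.one_apply] using hφ
    | succ n ih => intro φ hφ; rw [pow_succ, Module.End.mul_apply]; exact ih _ (hTK _ hφ)
  have hSapp : ∀ n φ, S n φ = ∑ i ∈ range (n + 1), (((n : ℝ) + 1)⁻¹) • ((T ^ i) φ) := by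
    intro n φ
    simp [hS, LinearMap.smul_apply, LinearMap.sum_apply, Finset.smul_sum]
  have hScont : ∀ n, Continuous (S n) := by
    intro n
    have : Continuous fun φ : ι → ℝ => ∑ i ∈ range (n + 1), (((n : ℝ) + 1)⁻¹) • ((T ^ i) φ) :=
      continuous_finset_sum _ fun i _ => (hpowc i).const_smul (((n : ℝ) + 1)⁻¹)
    simpa [funext (hSapp n)] using this
  have hSK : ∀ n, ∀ φ ∈ K, S n φ ∈ K := by
    intro n φ hφ
    rw [hSapp]
    refine hconv.sum_mem (fun i _ => by positivity) ?_ (fun i _ => hpowK i φ hφ)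
    rw [Finset.sum_const, card_range, nsmul_eq_mul]
    push_cast
    field_simp
  have hScomm : ∀ n m, S n * S m = S m * S n := by
    intro n m
    have hc : Commute (∑ i ∈ range (n + 1), T ^ i) (∑ i ∈ range (m + 1), T ^ i) :=
      Commute.sum_left _ _ _ fun i _ =>
        Commute.sum_right _ _ _ fun j _ => (Commute.refl T).pow_pow i j
    simp only [hS, smul_mul_assoc, mul_smul_comm, hc.eq, smul_smul, mul_comm]
  -- S n commutes with T
  have hSTcomm : ∀ n, T * S n = S n * T := by
    intro n
    have hc : Commute T (∑ i ∈ range (n + 1), T ^ i) :=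
      Commute.sum_right _ _ _ fun j _ => Commute.pow_right (Commute.refl T) j
    simp only [hS, mul_smul_comm, smul_mul_assoc, hc.eq]
  -- nested nonempty intersections
  obtain ⟨x₀, hx₀⟩ := hne
  have hWne : ∀ n : ℕ, ∃ z ∈ K, ∀ m ≤ n, z ∈ S m '' K := by
    intro n
    induction n with
    | zero =>
      refine ⟨S 0 x₀, hSK 0 x₀ hx₀, ?_⟩
      intro m hm; interval_cases m
      exact ⟨x₀, hx₀, rfl⟩
    | succ n ih =>
      obtain ⟨z, hzK, hz⟩ := ih
      refine ⟨S (n + 1) z, hSK _ z hzK, ?_⟩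
      intro m hm
      rcases Nat.lt_or_ge m (n + 1) with h | h
      · obtain ⟨y, hyK, hyz⟩ := hz m (Nat.lt_succ_iff.mp h)
        refine ⟨S (n + 1) y, hSK _ y hyK, ?_⟩
        have := congrArg (fun ψ => S (n+1) ψ) hyz
        calc S m (S (n+1) y) = (S m * S (n+1)) y := rfl
          _ = (S (n+1) * S m) y := by rw [hScomm]
          _ = S (n+1) (S m y) := rfl
          _ = S (n+1) z := by rw [hyz]
      · have : m = n + 1 := le_antisymm hm h
        exact this ▸ ⟨z, hzK, rfl⟩
  set Kc : ℕ → Set (ι → ℝ) := fun n => ⋂ m ∈ Finset.range (n + 1), S m '' K with hKc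
  have hKcne : ∀ n, (Kc n).Nonempty := by
    intro n
    obtain ⟨z, hzK, hz⟩ := hWne n
    exact ⟨z, Set.mem_iInter₂.mpr fun m hm => hz m (Nat.lt_succ_iff.mp (Finset.mem_range.mp hm))⟩
  have hKcsub : ∀ n, Kc n ⊆ K := by
    intro n φ hφ
    have := Set.mem_iInter₂.mp hφ 0 (by simp)
    obtain ⟨y, hyK, hyz⟩ := this
    exact hyz ▸ hSK 0 y hyK
  have hKccl : ∀ n, IsClosed (Kc n) :=
    fun n => isClosed_biInter fun m _ => (hcomp.image (hScont m)).isClosed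
  have hKccomp : ∀ n, IsCompact (Kc n) :=
    fun n => hcomp.of_isClosed_subset (hKccl n) (hKcsub n)
  have hKcdec : ∀ n, Kc (n + 1) ⊆ Kc n := by
    intro n φ hφ
    refine Set.mem_iInter₂.mpr fun m hm => Set.mem_iInter₂.mp hφ m ?_
    simp only [Finset.mem_range] at hm ⊢; omega
  obtain ⟨q, hq⟩ :=
    IsCompact.nonempty_iInter_of_sequence_nonempty_isCompact_isClosed Kc hKcdec hKcne
      (hKccomp 0) hKccl
  have hqK : q ∈ K := hKcsub 0 (Set.mem_iInter.mp hq 0)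
  refine ⟨q, hqK, ?_⟩
  funext i
  have habs : ∀ n : ℕ, |T q i - q i| ≤ (((n : ℝ) + 1)⁻¹) * (2 * C i) := by
    intro n
    have hqmem : q ∈ S n '' K := Set.mem_iInter₂.mp (Set.mem_iInter.mp hq n) n (by simp)
    obtain ⟨x, hxK, hxq⟩ := hqmem
    have key : (T * S n - S n) = (((n : ℝ) + 1)⁻¹) • ((T ^ (n + 1) : Module.End ℝ (ι → ℝ)) - 1) := by
      have geo : (∑ i ∈ range (n + 1), T ^ i) * (T - 1) = T ^ (n + 1) - 1 := geom_sum_mul T (n + 1)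
      have : T * S n - S n = S n * (T - 1) := by
        rw [mul_sub, mul_one, hSTcomm]
      rw [this, hS]
      simp only [smul_mul_assoc, geo]
    have : T q - q = (((n : ℝ) + 1)⁻¹) • ((T ^ (n + 1)) x - x) := by
      have h1 : T q - q = (T * S n - S n) x := by
        simp [LinearMap.sub_apply, Module.End.mul_apply, hxq]
      rw [h1, key]
      simp [LinearMap.smul_apply, LinearMap.sub_apply, Module.End.one_apply]
    have hcoord : T q i - q i = (((n : ℝ) + 1)⁻¹) * ((T ^ (n + 1)) x i - x i) := by
      have := congrFun this i
      simpa using this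
    rw [hcoord, abs_mul]
    have hpos : |(((n : ℝ) + 1)⁻¹)| = ((n : ℝ) + 1)⁻¹ := abs_of_pos (by positivity)
    rw [hpos]
    have h1 : |(T ^ (n + 1)) x i - x i| ≤ 2 * C i := by
      have := hbd _ (hpowK (n + 1) x hxK) i
      have := hbd x hxK i
      calc |(T ^ (n + 1)) x i - x i| ≤ |(T ^ (n + 1)) x i| + |x i| := abs_sub _ _
        _ ≤ C i + C i := add_le_add (hbd _ (hpowK (n + 1) x hxK) i) (hbd x hxK i)
        _ = 2 * C i := by ring
    exact mul_le_mul_of_nonneg_left h1 (by positivity)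
  by_contra hne'
  have hpos : 0 < |T q i - q i| := abs_pos.mpr (sub_ne_zero.mpr hne')
  obtain ⟨n, hn⟩ := exists_nat_gt (2 * C i / |T q i - q i|)
  have h2 : 2 * C i < ((n : ℝ) + 1) * |T q i - q i| := by
    rw [div_lt_iff₀ hpos] at hn
    nlinarith
  have h3 : ((n : ℝ) + 1) * |T q i - q i| ≤ 2 * C i := by
    have hn1 : (0 : ℝ) < (n : ℝ) + 1 := by positivity
    have h4 := mul_le_mul_of_nonneg_left (habs n) (le_of_lt hn1)
    rw [← mul_assoc, mul_inv_cancel₀ (ne_of_gt hn1), one_mul] at h4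
    exact h4
  linarith

theorem mk_family {ι : Type*} (C : ι → ℝ) {K : Set (ι → ℝ)} (hne : K.Nonempty)
    (hcomp : IsCompact K) (hconv : Convex ℝ K) (hbd : ∀ φ ∈ K, ∀ i, |φ i| ≤ C i)
    {κ : Type*} (T : κ → Module.End ℝ (ι → ℝ)) (hTc : ∀ k, Continuous (T k))
    (hTK : ∀ k, ∀ φ ∈ K, T k φ ∈ K) (hcomm : ∀ k l, T k * T l = T l * T k) :
    ∃ φ ∈ K, ∀ k, T k φ = φ := by
  set Fix : κ → Set (ι → ℝ) := fun k => {φ | T k φ = φ} with hFix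
  have hFixCl : ∀ k, IsClosed (Fix k) := fun k => isClosed_eq (hTc k) continuous_id
  have hFixConv : ∀ k, Convex ℝ (Fix k) := by
    intro k φ hφ ψ hψ a b ha hb hab
    simp only [hFix, Set.mem_setOf_eq] at *
    rw [map_add, map_smul, map_smul, hφ, hψ]
  have hfin : ∀ s : Finset κ, (K ∩ ⋂ k ∈ s, Fix k).Nonempty := by
    intro s
    classical
    induction s using Finset.induction_on with
    | empty => simpa using hne
    | @insert a s ha ih =>
      set Ks := K ∩ ⋂ k ∈ s, Fix k with hKs
      have hKscl : IsClosed (⋂ k ∈ s, Fix k) := isClosed_biInter fun k _ => hFixCl k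
      have hKscomp : IsCompact Ks := hcomp.of_isClosed_subset
        (hcomp.isClosed.inter hKscl) Set.inter_subset_left
      have hKsconv : Convex ℝ Ks := hconv.inter (convex_iInter₂ fun k _ => hFixConv k)
      have hKsbd : ∀ φ ∈ Ks, ∀ i, |φ i| ≤ C i := fun φ hφ => hbd φ hφ.1
      have hKsT : ∀ φ ∈ Ks, T a φ ∈ Ks := by
        rintro φ ⟨hφK, hφF⟩
        refine ⟨hTK a φ hφK, Set.mem_iInter₂.mpr fun k hk => ?_⟩
        have hφk : T k φ = φ := Set.mem_iInter₂.mp hφF k hk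
        show T k (T a φ) = T a φ
        calc T k (T a φ) = (T k * T a) φ := rfl
          _ = (T a * T k) φ := by rw [hcomm]
          _ = T a (T k φ) := rfl
          _ = T a φ := by rw [hφk]
      obtain ⟨φ, hφKs, hφfix⟩ := mk_single C ih hKscomp hKsconv hKsbd (T a) (hTc a) hKsT
      refine ⟨φ, hφKs.1, Set.mem_iInter₂.mpr fun k hk => ?_⟩
      rcases Finset.mem_insert.mp hk with rfl | hk
      · exact hφfix
      · exact Set.mem_iInter₂.mp hφKs.2 k hk
  by_contra hcon
  have hempty : K ∩ ⋂ k, Fix k = ∅ := by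
    rw [Set.eq_empty_iff_forall_notMem]
    rintro φ ⟨hφK, hφF⟩
    exact hcon ⟨φ, hφK, fun k => Set.mem_iInter.mp hφF k⟩
  obtain ⟨u, hu⟩ := hcomp.elim_finite_subfamily_closed Fix hFixCl hempty
  obtain ⟨φ, hφ⟩ := hfin u
  rw [Set.eq_empty_iff_forall_notMem] at hu
  exact hu φ hφ

theorem dual_bound_aux {W G : Type*} [SeminormedAddCommGroup W] [NormedSpace ℝ W]
    [SeminormedAddCommGroup G] [NormedSpace ℝ G] (P : W →L[ℝ] G) :
    ∃ M : ℝ, ∀ (z : W) (b : ℝ), ‖z‖ ≤ b → ‖P z‖ ≤ M * b :=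
  ⟨‖P‖, fun z _ h => (P.le_opNorm z).trans
    (mul_le_mul_of_nonneg_left h (norm_nonneg _))⟩

/-- If a closed linear subspace `Y` of a real Banach space `X` is a Lipschitz retract
of `X` and `Y` is complemented in its bidual, then `Y` is complemented in `X`. -/
theorem complemented_of_lipschitz_retract_of_complemented_in_bidual
    {X : Type*} [NormedAddCommGroup X] [NormedSpace ℝ X] [CompleteSpace X]
    (Y : Submodule ℝ X) (hYc : IsClosed (Y : Set X))
    (hret : ∃ (K : NNReal) (r : X → X),
      LipschitzWith K r ∧ Set.range r ⊆ (Y : Set X) ∧ ∀ y ∈ Y, r y = y)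
    (hbidual : ∃ P : StrongDual ℝ (StrongDual ℝ Y) →L[ℝ] Y,
      ∀ y : Y, P (NormedSpace.inclusionInDoubleDual ℝ Y y) = y) :
    ∃ Q : X →L[ℝ] X, Set.range Q = (Y : Set X) ∧ ∀ y ∈ Y, Q y = y := by
  obtain ⟨K, r, hlip, hrange, hfix⟩ := hret
  obtain ⟨P, hP⟩ := hbidual
  set D := StrongDual ℝ Y with hD
  set c : ℝ := (K : ℝ) with hc
  have hc0 : 0 ≤ c := K.coe_nonneg
  -- the compact convex set
  set K₀ : Set ((X × D) → ℝ) := {φ |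
      (∀ (x : X) (f g : D), φ (x, f + g) = φ (x, f) + φ (x, g)) ∧
      (∀ (x : X) (a : ℝ) (f : D), φ (x, a • f) = a * φ (x, f)) ∧
      (∀ (x x' : X) (f : D), |φ (x, f) - φ (x', f)| ≤ c * ‖f‖ * ‖x - x'‖) ∧
      (∀ (y : Y) (f : D), φ ((y : X), f) = f y)} with hK₀
  set Cb : X × D → ℝ := fun i => c * ‖i.2‖ * ‖i.1‖ with hCb
  have hzero : ∀ φ ∈ K₀, ∀ f : D, φ (0, f) = 0 := by
    intro φ hφ f
    have := hφ.2.2.2 0 f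
    simpa using this
  have hbd : ∀ φ ∈ K₀, ∀ i, |φ i| ≤ Cb i := by
    rintro φ hφ ⟨x, f⟩
    have h := hφ.2.2.1 x 0 f
    rw [hzero φ hφ f] at h
    simpa using h
  -- closedness
  have hK₀cl : IsClosed K₀ := by
    rw [hK₀]
    have e : {φ : (X × D) → ℝ |
        (∀ (x : X) (f g : D), φ (x, f + g) = φ (x, f) + φ (x, g)) ∧
        (∀ (x : X) (a : ℝ) (f : D), φ (x, a • f) = a * φ (x, f)) ∧
        (∀ (x x' : X) (f : D), |φ (x, f) - φ (x', f)| ≤ c * ‖f‖ * ‖x - x'‖) ∧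
        (∀ (y : Y) (f : D), φ ((y : X), f) = f y)} =
        (⋂ (x : X), ⋂ (f : D), ⋂ (g : D),
          {φ : (X × D) → ℝ | φ (x, f + g) = φ (x, f) + φ (x, g)}) ∩
        ((⋂ (x : X), ⋂ (a : ℝ), ⋂ (f : D),
          {φ : (X × D) → ℝ | φ (x, a • f) = a * φ (x, f)}) ∩
        ((⋂ (x : X), ⋂ (x' : X), ⋂ (f : D),
          {φ : (X × D) → ℝ | |φ (x, f) - φ (x', f)| ≤ c * ‖f‖ * ‖x - x'‖}) ∩
        (⋂ (y : Y), ⋂ (f : D), {φ : (X × D) → ℝ | φ ((y : X), f) = f y}))) := by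
      ext φ
      simp only [Set.mem_setOf_eq, Set.mem_inter_iff, Set.mem_iInter]
    rw [e]
    refine IsClosed.inter ?_ (IsClosed.inter ?_ (IsClosed.inter ?_ ?_))
    · exact isClosed_iInter fun x => isClosed_iInter fun f => isClosed_iInter fun g =>
        isClosed_eq (continuous_apply (x, f + g)) ((continuous_apply (x, f)).add (continuous_apply (x, g)))
    · exact isClosed_iInter fun x => isClosed_iInter fun a => isClosed_iInter fun f =>
        isClosed_eq (continuous_apply (x, a • f)) (continuous_const.mul (continuous_apply (x, f)))
    · exact isClosed_iInter fun x => isClosed_iInter fun x' => isClosed_iInter fun f =>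
        isClosed_le ((continuous_apply (x, f)).sub (continuous_apply (x', f))).abs continuous_const
    · exact isClosed_iInter fun y => isClosed_iInter fun f =>
        isClosed_eq (continuous_apply ((y : X), f)) continuous_const
  have hK₀comp : IsCompact K₀ := by
    refine IsCompact.of_isClosed_subset (isCompact_univ_pi fun i => isCompact_Icc
      (a := -(Cb i)) (b := Cb i)) hK₀cl ?_
    intro φ hφ
    refine Set.mem_univ_pi.mpr fun i => ?_
    rw [Set.mem_Icc, ← abs_le]
    exact hbd φ hφ i
  have hK₀conv : Convex ℝ K₀ := by
    rintro φ ⟨h1, h2, h3, h4⟩ ψ ⟨g1, g2, g3, g4⟩ a b ha hb hab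
    refine ⟨?_, ?_, ?_, ?_⟩
    · intro x f g
      simp only [Pi.add_apply, Pi.smul_apply, smul_eq_mul, h1, g1]
      ring
    · intro x t f
      simp only [Pi.add_apply, Pi.smul_apply, smul_eq_mul, h2, g2]
      ring
    · intro x x' f
      simp only [Pi.add_apply, Pi.smul_apply, smul_eq_mul]
      have : a * φ (x, f) + b * ψ (x, f) - (a * φ (x', f) + b * ψ (x', f))
          = a * (φ (x, f) - φ (x', f)) + b * (ψ (x, f) - ψ (x', f)) := by ring
      rw [this]
      calc |a * (φ (x, f) - φ (x', f)) + b * (ψ (x, f) - ψ (x', f))|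
          ≤ |a * (φ (x, f) - φ (x', f))| + |b * (ψ (x, f) - ψ (x', f))| := abs_add_le _ _
        _ = a * |φ (x, f) - φ (x', f)| + b * |ψ (x, f) - ψ (x', f)| := by
            rw [abs_mul, abs_mul, abs_of_nonneg ha, abs_of_nonneg hb]
        _ ≤ a * (c * ‖f‖ * ‖x - x'‖) + b * (c * ‖f‖ * ‖x - x'‖) := by
            gcongr
            · exact h3 x x' f
            · exact g3 x x' f
        _ = c * ‖f‖ * ‖x - x'‖ := by rw [← add_mul, hab]; ring
    · intro y f
      simp only [Pi.add_apply, Pi.smul_apply, smul_eq_mul, h4, g4]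
      have : a * f y + b * f y = (a + b) * f y := by ring
      rw [this, hab, one_mul]
  -- nonempty : the retraction itself
  have hK₀ne : K₀.Nonempty := by
    refine ⟨fun i => i.2 ⟨r i.1, hrange ⟨i.1, rfl⟩⟩, ?_, ?_, ?_, ?_⟩
    · intro x f g; rfl
    · intro x a f; rfl
    · intro x x' f
      set u : Y := ⟨r x, hrange ⟨x, rfl⟩⟩
      set u' : Y := ⟨r x', hrange ⟨x', rfl⟩⟩
      have : f u - f u' = f (u - u') := (map_sub f u u').symm
      rw [this]
      have hn : ‖u - u'‖ ≤ c * ‖x - x'‖ := by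
        rw [← Submodule.norm_coe]
        have : ((u - u' : Y) : X) = r x - r x' := rfl
        rw [this, ← dist_eq_norm, ← dist_eq_norm]
        exact hlip.dist_le_mul x x'
      calc |f (u - u')| ≤ ‖f‖ * ‖u - u'‖ := f.le_opNorm _
        _ ≤ ‖f‖ * (c * ‖x - x'‖) := by gcongr
        _ = c * ‖f‖ * ‖x - x'‖ := by ring
    · intro y f
      have : (⟨r (y : X), hrange ⟨(y : X), rfl⟩⟩ : Y) = y := Subtype.ext (hfix (y : X) y.2)
      simp [this]
  -- the translation operators
  set Tmap : X → Module.End ℝ ((X × D) → ℝ) := fun v =>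
    { toFun := fun φ i => φ (i.1 + v, i.2) - φ (v, i.2),
      map_add' := by intro φ ψ; funext i; simp only [Pi.add_apply]; ring,
      map_smul' := by intro a φ; funext i; simp only [Pi.smul_apply, smul_eq_mul,
        RingHom.id_apply]; ring } with hT
  have hTapp : ∀ (v : X) (φ : (X × D) → ℝ) (i : X × D),
      Tmap v φ i = φ (i.1 + v, i.2) - φ (v, i.2) := fun v φ i => rfl
  have hTc : ∀ v, Continuous (Tmap v) := by
    intro v
    exact continuous_pi fun i => (continuous_apply (i.1 + v, i.2)).sub
      (continuous_apply (v, i.2))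
  have hTcomm : ∀ v w, Tmap v * Tmap w = Tmap w * Tmap v := by
    intro v w
    refine LinearMap.ext fun φ => funext fun i => ?_
    show Tmap v (Tmap w φ) i = Tmap w (Tmap v φ) i
    simp only [hTapp]
    have h1 : i.1 + v + w = i.1 + w + v := add_right_comm _ _ _
    have h2 : v + w = w + v := add_comm _ _
    rw [h1, h2]
    ring
  -- Tmap v preserves the first three conditions; for v ∈ Y also the fourth
  have hTlin : ∀ (v : X) (φ), φ ∈ K₀ →
      ((∀ (x : X) (f g : D), Tmap v φ (x, f + g) = Tmap v φ (x, f) + Tmap v φ (x, g)) ∧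
       (∀ (x : X) (a : ℝ) (f : D), Tmap v φ (x, a • f) = a * Tmap v φ (x, f)) ∧
       (∀ (x x' : X) (f : D), |Tmap v φ (x, f) - Tmap v φ (x', f)| ≤ c * ‖f‖ * ‖x - x'‖)) := by
    rintro v φ ⟨h1, h2, h3, h4⟩
    refine ⟨?_, ?_, ?_⟩
    · intro x f g; simp only [hTapp, h1]; ring
    · intro x a f; simp only [hTapp, h2]; ring
    · intro x x' f
      simp only [hTapp]
      have : φ (x + v, f) - φ (v, f) - (φ (x' + v, f) - φ (v, f))
          = φ (x + v, f) - φ (x' + v, f) := by ring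
      rw [this]
      have := h3 (x + v) (x' + v) f
      simpa using this
  have hTYK : ∀ (v : Y) (φ), φ ∈ K₀ → Tmap (v : X) φ ∈ K₀ := by
    intro v φ hφ
    obtain ⟨a1, a2, a3⟩ := hTlin (v : X) φ hφ
    refine ⟨a1, a2, a3, ?_⟩
    intro y f
    simp only [hTapp]
    have e1 : (y : X) + (v : X) = ((y + v : Y) : X) := rfl
    rw [e1, hφ.2.2.2 (y + v) f, hφ.2.2.2 v f, map_add]
    ring
  -- Stage 1
  obtain ⟨φ₁, hφ₁K, hφ₁fix⟩ := mk_family Cb hK₀ne hK₀comp hK₀conv hbd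
    (fun v : Y => Tmap (v : X)) (fun v => hTc _) (fun v => hTYK v) (fun v w => hTcomm _ _)
  -- the set K₁
  set K₁ : Set ((X × D) → ℝ) := K₀ ∩ ⋂ v : Y, {φ | Tmap (v : X) φ = φ} with hK₁
  have hK₁ne : K₁.Nonempty := ⟨φ₁, hφ₁K, Set.mem_iInter.mpr fun v => hφ₁fix v⟩
  have hK₁cl : IsClosed K₁ :=
    hK₀cl.inter (isClosed_iInter fun v => isClosed_eq (hTc _) continuous_id)
  have hK₁comp : IsCompact K₁ :=
    hK₀comp.of_isClosed_subset hK₁cl Set.inter_subset_left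
  have hK₁conv : Convex ℝ K₁ := by
    refine hK₀conv.inter (convex_iInter fun v => ?_)
    intro φ hφ ψ hψ a b ha hb hab
    show Tmap (v : X) (a • φ + b • ψ) = a • φ + b • ψ
    rw [map_add, map_smul, map_smul]
    rw [show Tmap (v : X) φ = φ from hφ, show Tmap (v : X) ψ = ψ from hψ]
  have hK₁bd : ∀ φ ∈ K₁, ∀ i, |φ i| ≤ Cb i := fun φ hφ => hbd φ hφ.1
  have hK₁T : ∀ (v : X) (φ), φ ∈ K₁ → Tmap v φ ∈ K₁ := by
    rintro v φ ⟨hφK, hφF⟩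
    have hφfix : ∀ w : Y, Tmap (w : X) φ = φ := fun w => Set.mem_iInter.mp hφF w
    constructor
    · obtain ⟨a1, a2, a3⟩ := hTlin v φ hφK
      refine ⟨a1, a2, a3, ?_⟩
      intro y f
      simp only [hTapp]
      have h5 : φ ((y : X) + v, f) = φ (v + (y : X), f) := by rw [add_comm]
      have h6 : φ (v + (y : X), f) = φ (v, f) + φ ((y : X), f) := by
        have := congrFun (hφfix y) (v, f)
        simp only [hTapp] at this
        have h7 : φ ((y : X), f) = f y := hφK.2.2.2 y f
        -- this : φ (v + ↑y, f) - φ (↑y, f) = φ (v, f)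
        linarith [this]
      rw [h5, h6, hφK.2.2.2 y f]
      ring
    · refine Set.mem_iInter.mpr fun w => ?_
      show Tmap (w : X) (Tmap v φ) = Tmap v φ
      calc Tmap (w : X) (Tmap v φ) = (Tmap (w : X) * Tmap v) φ := rfl
        _ = (Tmap v * Tmap (w : X)) φ := by rw [hTcomm]
        _ = Tmap v (Tmap (w : X) φ) := rfl
        _ = Tmap v φ := by rw [hφfix w]
  -- Stage 2
  obtain ⟨φs, hφsK, hφsfix⟩ := mk_family Cb hK₁ne hK₁comp hK₁conv hK₁bd
    Tmap hTc hK₁T hTcomm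
  obtain ⟨hs1, hs2, hs3, hs4⟩ := hφsK.1
  have hsadd : ∀ (x v : X) (f : D), φs (x + v, f) = φs (x, f) + φs (v, f) := by
    intro x v f
    have := congrFun (hφsfix v) (x, f)
    simp only [hTapp] at this
    linarith [this]
  have hs0 : ∀ f : D, φs (0, f) = 0 := hzero φs hφsK.1
  have hsbd : ∀ (x : X) (f : D), |φs (x, f)| ≤ c * ‖x‖ * ‖f‖ := by
    intro x f
    have := hbd φs hφsK.1 (x, f)
    calc |φs (x, f)| ≤ c * ‖f‖ * ‖x‖ := this
      _ = c * ‖x‖ * ‖f‖ := by ring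
  -- build the element of the bidual
  set F : X → StrongDual ℝ D := fun x =>
    LinearMap.mkContinuous
      { toFun := fun f => φs (x, f),
        map_add' := fun f g => hs1 x f g,
        map_smul' := fun a f => hs2 x a f }
      (c * ‖x‖) (fun f => hsbd x f) with hF
  have hFapp : ∀ (x : X) (f : D), F x f = φs (x, f) := fun x f => rfl
  set g : X → Y := fun x => P (F x) with hg
  have hgadd : ∀ x v, g (x + v) = g x + g v := by
    intro x v
    have : F (x + v) = F x + F v := by
      refine ContinuousLinearMap.ext fun f => ?_
      simp only [ContinuousLinearMap.add_apply, hFapp]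
      exact hsadd x v f
    simp only [hg, this, map_add]
  have hgy : ∀ y : Y, g (y : X) = y := by
    intro y
    have : F (y : X) = NormedSpace.inclusionInDoubleDual ℝ Y y := by
      refine ContinuousLinearMap.ext fun f => ?_
      rw [hFapp, NormedSpace.dual_def]
      exact hs4 y f
    show P (F (y : X)) = y
    rw [this]
    exact hP y
  letI i1 : SeminormedAddCommGroup D := inferInstanceAs (SeminormedAddCommGroup (StrongDual ℝ Y))
  letI i2 : NormedSpace ℝ D := inferInstanceAs (NormedSpace ℝ (StrongDual ℝ Y))
  obtain ⟨M, hM⟩ := dual_bound_aux (W := StrongDual ℝ D) (G := Y) P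
  have hgbd : ∀ x, ‖g x‖ ≤ M * c * ‖x‖ := by
    intro x
    have h1 : ‖F x‖ ≤ c * ‖x‖ :=
      LinearMap.mkContinuous_norm_le _ (by positivity) _
    rw [mul_assoc]
    exact hM (F x) _ h1
  set gHom : X →+ Y := AddMonoidHom.mk' g hgadd with hgHom
  have hgcont : Continuous g := by
    have := AddMonoidHomClass.lipschitz_of_bound gHom (M * c) hgbd
    exact this.continuous
  set gL : X →L[ℝ] Y := gHom.toRealLinearMap hgcont with hgL
  have hgLapp : ∀ x, gL x = g x := fun x => congrFun (AddMonoidHom.coe_toRealLinearMap gHom hgcont) x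
  refine ⟨Y.subtypeL.comp gL, ?_, ?_⟩
  · apply Set.Subset.antisymm
    · rintro _ ⟨x, rfl⟩
      simp only [ContinuousLinearMap.comp_apply, Submodule.subtypeL_apply]
      exact (gL x).2
    · intro y hy
      refine ⟨y, ?_⟩
      simp only [ContinuousLinearMap.comp_apply, Submodule.subtypeL_apply, hgLapp]
      exact congrArg _ (hgy ⟨y, hy⟩)
  · intro y hy
    simp only [ContinuousLinearMap.comp_apply, Submodule.subtypeL_apply, hgLapp]
    exact congrArg _ (hgy ⟨y, hy⟩)
end
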